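/- arXiv:2509.07657 — 3 statements merged into one kernel-verified Lean document; each statement's English description precedes it below -/
import Mathlib

section
/- Let (Ω, μ) be a probability space, r ≥ 1, and let Z ∈ L^r(μ) be a real-valued random variable. Then ‖ω₁(|Z|)‖_{L^r} ≤ 2 ω₁(‖Z‖_{L^r}). -/
open MeasureTheory

/-- `ℓ(t) = -log t` for `0 < t ≤ 1/3` and `ℓ(t) = log 3` for `t ≥ 1/3`. -/
noncomputable def ell (t : ℝ) : ℝ := if t ≤ 1/3 then -Real.log t else Real.log 3

/-- `ω_q(t) = (t ℓ(t))^q` for `t > 0` and `ω_q(0) = 0`. -/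
noncomputable def omegaQ (q t : ℝ) : ℝ := if t = 0 then 0 else (t * ell t) ^ q

lemma one_lt_log3 : 1 < Real.log 3 := by
  rw [show (1:ℝ) = Real.log (Real.exp 1) by simp]
  apply Real.log_lt_log (Real.exp_pos 1)
  calc Real.exp 1 < 2.7182818286 := Real.exp_one_lt_d9
    _ < 3 := by norm_num

lemma ell_eq_max {t : ℝ} (ht : 0 < t) : ell t = max (Real.log 3) (-Real.log t) := by
  unfold ell
  split_ifs with h
  · rw [max_eq_right]
    have h1 : Real.log t ≤ Real.log (1/3) := Real.log_le_log ht h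
    rw [one_div, Real.log_inv] at h1
    linarith
  · rw [max_eq_left]
    push_neg at h
    have h1 : Real.log (1/3) ≤ Real.log t := Real.log_le_log (by norm_num) h.le
    rw [one_div, Real.log_inv] at h1
    linarith

lemma log3_le_ell {t : ℝ} (ht : 0 < t) : Real.log 3 ≤ ell t := by
  rw [ell_eq_max ht]; exact le_max_left _ _

lemma ell_pos {t : ℝ} (ht : 0 < t) : 0 < ell t :=
  lt_of_lt_of_le (by linarith [one_lt_log3]) (log3_le_ell ht)

lemma measurable_ell : Measurable ell := by
  unfold ell
  exact Measurable.ite (measurableSet_le measurable_id measurable_const)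
    Real.measurable_log.neg measurable_const

lemma measurable_omega1 : Measurable (omegaQ 1) := by
  unfold omegaQ
  apply Measurable.ite (MeasurableSet.singleton 0 : MeasurableSet {t : ℝ | t = 0})
    measurable_const
  have : Measurable fun t : ℝ => t * ell t := measurable_id.mul measurable_ell
  measurability

/-- Key pointwise bound: for `0 < M`, `ω₁(s) ≤ ℓ(M) s + (ℓ(M)/log 3) M`. -/
lemma omega1_le {M s : ℝ} (hM : 0 < M) (hs : 0 ≤ s) :
    omegaQ 1 s ≤ ell M * s + (ell M / Real.log 3) * M := by
  have hL : 0 < ell M := ell_pos hM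
  have hlog3 : (0:ℝ) < Real.log 3 := by linarith [one_lt_log3]
  have hcM : 0 ≤ (ell M / Real.log 3) * M := by positivity
  rcases eq_or_lt_of_le hs with h0 | hs
  · simp [omegaQ, ← h0]
    positivity
  · have hωs : omegaQ 1 s = s * ell s := by
      rw [omegaQ, if_neg hs.ne', Real.rpow_one]
    rcases le_total M s with h | h
    · -- s ≥ M : ell s ≤ ell M
      have he : ell s ≤ ell M := by
        rw [ell_eq_max hs, ell_eq_max hM]
        exact max_le_max le_rfl (neg_le_neg (Real.log_le_log hM h))
      have : s * ell s ≤ s * ell M := by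
        exact mul_le_mul_of_nonneg_left he hs.le
      rw [hωs]; nlinarith
    · -- s ≤ M : ell s ≤ ell M + log (M/s)
      have hd : 0 ≤ Real.log (M/s) := Real.log_nonneg (by rw [le_div_iff₀ hs]; linarith)
      have he : ell s ≤ ell M + Real.log (M/s) := by
        rw [ell_eq_max hs, ell_eq_max hM]
        have hlogdiv : Real.log (M/s) = Real.log M - Real.log s :=
          Real.log_div hM.ne' hs.ne'
        apply max_le
        · have := le_max_left (Real.log 3) (-Real.log M); linarith
        · have := le_max_right (Real.log 3) (-Real.log M); linarith
      have hsl : s * Real.log (M/s) ≤ M := by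
        have h1 : Real.log (M/s) ≤ M/s - 1 :=
          Real.log_le_sub_one_of_pos (div_pos hM hs)
        have h2 : s * Real.log (M/s) ≤ s * (M/s - 1) :=
          mul_le_mul_of_nonneg_left h1 hs.le
        have h3 : s * (M/s - 1) = M - s := by field_simp
        linarith
      have hM' : M ≤ (ell M / Real.log 3) * M := by
        have h1 : (1:ℝ) ≤ ell M / Real.log 3 :=
          (one_le_div hlog3).mpr (log3_le_ell hM)
        nlinarith
      have : s * ell s ≤ s * (ell M + Real.log (M/s)) :=
        mul_le_mul_of_nonneg_left he hs.le
      rw [hωs]; nlinarith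

/-- for a probability space `(Ω, μ)`, `r ≥ 1` and `Z ∈ L^r(μ)` real-valued,
`‖ω₁(|Z|)‖_{L^r} ≤ 2 ω₁(‖Z‖_{L^r})`, where `‖Z‖_{L^r} = (∫ |Z|^r dμ)^{1/r}`. -/
theorem omegaQ_one_Lr_bound {Ω : Type*} [MeasurableSpace Ω] (μ : Measure Ω)
    [IsProbabilityMeasure μ] (r : ℝ) (hr : 1 ≤ r) (Z : Ω → ℝ)
    (hZ : MemLp Z (ENNReal.ofReal r) μ) :
    (∫ ω, omegaQ 1 |Z ω| ^ r ∂μ) ^ (1/r) ≤ 2 * omegaQ 1 ((∫ ω, |Z ω| ^ r ∂μ) ^ (1/r)) := by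
  have hr0 : (0:ℝ) < r := by linarith
  have hlog3 : (1:ℝ) < Real.log 3 := one_lt_log3
  -- integrability of |Z|^r
  have hint : Integrable (fun ω => |Z ω| ^ r) μ := by
    have := hZ.integrable_norm_rpow (by simp [ENNReal.ofReal_eq_zero]; linarith)
      ENNReal.ofReal_ne_top
    simpa [ENNReal.toReal_ofReal hr0.le] using this
  set I : ℝ := ∫ ω, |Z ω| ^ r ∂μ with hI
  have hI0 : 0 ≤ I := integral_nonneg fun ω => Real.rpow_nonneg (abs_nonneg _) r
  set M : ℝ := I ^ (1/r) with hMdef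
  have hMr : M ^ r = I := by
    rw [hMdef, one_div, Real.rpow_inv_rpow hI0 hr0.ne']
  rcases eq_or_lt_of_le hI0 with hIz | hIpos
  · -- I = 0 : Z = 0 a.e.
    have hz : (fun ω => |Z ω| ^ r) =ᵐ[μ] 0 :=
      (integral_eq_zero_iff_of_nonneg (fun ω => Real.rpow_nonneg (abs_nonneg _) r) hint).mp hIz.symm
    have hz2 : (fun ω => omegaQ 1 |Z ω| ^ r) =ᵐ[μ] 0 := by
      filter_upwards [hz] with ω hω
      have : |Z ω| = 0 := by
        by_contra hne
        have : (0:ℝ) < |Z ω| := (abs_nonneg _).lt_of_ne (Ne.symm hne)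
        have := Real.rpow_pos_of_pos this r
        simp only [Pi.zero_apply] at hω
        linarith
      simp [this, omegaQ, Real.zero_rpow hr0.ne']
    have hL : (∫ ω, omegaQ 1 |Z ω| ^ r ∂μ) = 0 := by
      rw [integral_congr_ae hz2]; simp
    rw [hL, Real.zero_rpow (by positivity : (1:ℝ)/r ≠ 0)]
    have : M = 0 := by rw [hMdef, ← hIz, Real.zero_rpow (by positivity : (1:ℝ)/r ≠ 0)]
    rw [this]
    simp [omegaQ]
  · -- I > 0, so M > 0
    have hM : 0 < M := Real.rpow_pos_of_pos hIpos _
    set L : ℝ := ell M with hLdef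
    have hL : 0 < L := ell_pos hM
    set c : ℝ := 1 / Real.log 3 with hcdef
    have hc : 0 < c := by positivity
    have hc1 : c ≤ 1 := by
      rw [hcdef]
      rw [div_le_one (by linarith)]; linarith
    -- pointwise bound, after convexity
    have key : ∀ ω, omegaQ 1 |Z ω| ^ r ≤
        (L * (1+c)) ^ r * ((1/(1+c)) * |Z ω| ^ r + (c/(1+c)) * M ^ r) := by
      intro ω
      have hs : 0 ≤ |Z ω| := abs_nonneg _
      have h1 : omegaQ 1 |Z ω| ≤ L * (1+c) * ((1/(1+c)) * |Z ω| + (c/(1+c)) * M) := by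
        have := omega1_le hM hs
        have hc0 : (1:ℝ) + c ≠ 0 := by positivity
        have heq : L * (1+c) * ((1/(1+c)) * |Z ω| + (c/(1+c)) * M)
            = L * |Z ω| + (L * c) * M := by field_simp
        rw [heq]
        have h2 : ell M / Real.log 3 * M = L * c * M := by rw [hcdef, hLdef]; ring
        have h3 : ell M * |Z ω| = L * |Z ω| := by rw [hLdef]
        linarith
      have hω0 : 0 ≤ omegaQ 1 |Z ω| := by
        rcases eq_or_lt_of_le hs with h0 | hpos
        · simp [omegaQ, ← h0]
        · rw [omegaQ, if_neg hpos.ne', Real.rpow_one]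
          exact mul_nonneg hpos.le (ell_pos hpos).le
      have h2 : omegaQ 1 |Z ω| ^ r ≤
          (L * (1+c) * ((1/(1+c)) * |Z ω| + (c/(1+c)) * M)) ^ r :=
        Real.rpow_le_rpow hω0 h1 hr0.le
      have hconvpt : ((1/(1+c)) * |Z ω| + (c/(1+c)) * M) ^ r ≤
          (1/(1+c)) * |Z ω| ^ r + (c/(1+c)) * M ^ r := by
        have hcv := (convexOn_rpow hr).2 (Set.mem_Ici.mpr hs) (Set.mem_Ici.mpr hM.le)
          (by positivity : (0:ℝ) ≤ 1/(1+c)) (by positivity : (0:ℝ) ≤ c/(1+c))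
          (by field_simp)
        simpa [smul_eq_mul] using hcv
      calc omegaQ 1 |Z ω| ^ r
          ≤ (L * (1+c) * ((1/(1+c)) * |Z ω| + (c/(1+c)) * M)) ^ r := h2
        _ = (L * (1+c)) ^ r * ((1/(1+c)) * |Z ω| + (c/(1+c)) * M) ^ r := by
            rw [Real.mul_rpow (by positivity) (by positivity)]
        _ ≤ (L * (1+c)) ^ r * ((1/(1+c)) * |Z ω| ^ r + (c/(1+c)) * M ^ r) :=
            mul_le_mul_of_nonneg_left hconvpt (by positivity)
    -- integrability of the RHS
    have hintg : Integrable (fun ω => (L * (1+c)) ^ r *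
        ((1/(1+c)) * |Z ω| ^ r + (c/(1+c)) * M ^ r)) μ := by
      exact (((hint.const_mul _).add (integrable_const _)).const_mul _)
    -- integrability of the LHS
    have hmLHS : AEStronglyMeasurable (fun ω => omegaQ 1 |Z ω| ^ r) μ := by
      have hm : Measurable fun t : ℝ => omegaQ 1 |t| ^ r := by
        have := measurable_omega1
        measurability
      exact (hm.comp_aemeasurable hZ.1.aemeasurable).aestronglyMeasurable
    have hintf : Integrable (fun ω => omegaQ 1 |Z ω| ^ r) μ := by
      refine hintg.mono' hmLHS ?_
      filter_upwards with ω
      rw [Real.norm_eq_abs, abs_of_nonneg (Real.rpow_nonneg ?_ r)]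
      · exact key ω
      · rcases eq_or_lt_of_le (abs_nonneg (Z ω)) with h0 | hpos
        · simp [omegaQ, ← h0]
        · rw [omegaQ, if_neg hpos.ne', Real.rpow_one]
          exact mul_nonneg hpos.le (ell_pos hpos).le
    have hIle : (∫ ω, omegaQ 1 |Z ω| ^ r ∂μ) ≤ (L * (1+c)) ^ r * I := by
      calc (∫ ω, omegaQ 1 |Z ω| ^ r ∂μ)
          ≤ ∫ ω, (L * (1+c)) ^ r * ((1/(1+c)) * |Z ω| ^ r + (c/(1+c)) * M ^ r) ∂μ :=
            integral_mono hintf hintg key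
        _ = (L * (1+c)) ^ r * ((1/(1+c)) * I + (c/(1+c)) * M ^ r) := by
            rw [integral_const_mul, integral_add (hint.const_mul _) (integrable_const _),
              integral_const_mul, integral_const]
            simp [hI]
        _ = (L * (1+c)) ^ r * I := by
            rw [hMr]
            have hc0 : (1:ℝ) + c ≠ 0 := by positivity
            field_simp
    have hfin : (∫ ω, omegaQ 1 |Z ω| ^ r ∂μ) ^ (1/r) ≤ L * (1+c) * M := by
      calc (∫ ω, omegaQ 1 |Z ω| ^ r ∂μ) ^ (1/r)
          ≤ ((L * (1+c)) ^ r * I) ^ (1/r) := by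
            apply Real.rpow_le_rpow _ hIle (by positivity)
            exact integral_nonneg fun ω => Real.rpow_nonneg (by
              rcases eq_or_lt_of_le (abs_nonneg (Z ω)) with h0 | hpos
              · simp [omegaQ, ← h0]
              · rw [omegaQ, if_neg hpos.ne', Real.rpow_one]
                exact mul_nonneg hpos.le (ell_pos hpos).le) r
        _ = ((L * (1+c)) ^ r) ^ (1/r) * I ^ (1/r) := by
            rw [Real.mul_rpow (by positivity) hI0]
        _ = L * (1+c) * M := by
            rw [one_div, Real.rpow_rpow_inv (by positivity) hr0.ne', hMdef, one_div]
    have hRHS : 2 * omegaQ 1 M = 2 * (M * L) := by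
      rw [omegaQ, if_neg hM.ne', Real.rpow_one, hLdef]
    calc (∫ ω, omegaQ 1 |Z ω| ^ r ∂μ) ^ (1/r)
        ≤ L * (1+c) * M := hfin
      _ ≤ 2 * (M * L) := by
          have hh : c * (L * M) ≤ 1 * (L * M) :=
            mul_le_mul_of_nonneg_right hc1 (by positivity)
          nlinarith [hh]
      _ = 2 * omegaQ 1 M := hRHS.symm
end

section
/- Let (M, d) be a metric space of finite diameter and C₀ ≥ 1. Let Ψ: [0,∞) × M → M be a semiflow (Ψ_0 = id, Ψ_{t+s} = Ψ_t ∘ Ψ_s) such that d(Ψ_t x, Ψ_t y) ≤ C₀ d(x,y) for all t ∈ [0,1] and x,y ∈ M, and d(Ψ_t x, Ψ_s x) ≤ C₀ |t − s| for all s,t ≥ 0 and x ∈ M. Let η ∈ (0,1], X ⊆ M, let h: X → [1,∞) be bounded and η-Hölder (there is K > 0 with |h(x) − h(y)| ≤ K d(x,y)^η for x,y ∈ X), and let v: M → ℝ be bounded and η-Hölder. Then the function ṽ: X → ℝ defined by ṽ(x) = ∫_0^{h(x)} v(Ψ_u x) du is η-Hölder on X, i.e. there is a constant K' > 0 such that |ṽ(x)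 − ṽ(y)| ≤ K' d(x,y)^η for all x, y ∈ X. -/
open MeasureTheory Set

/-- Let `(M,d)` be a metric space of finite diameter, `C₀ ≥ 1`, and
`Ψ` a semiflow on `M` which is Lipschitz in space for `t ∈ [0,1]` and Lipschitz in time.
Let `η ∈ (0,1]`, `X ⊆ M`, `h : X → [1,∞)` bounded and `η`-Hölder, and `v : M → ℝ`
bounded and `η`-Hölder. Then `ṽ(x) = ∫_0^{h(x)} v(Ψ_u x) du` is `η`-Hölder on `X`. -/
theorem induced_observable_holder {M : Type*} [MetricSpace M]
    (hbdd : Bornology.IsBounded (Set.univ : Set M))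
    (C₀ : ℝ) (hC₀ : 1 ≤ C₀)
    (Ψ : ℝ → M → M) (hΨ0 : Ψ 0 = id)
    (hΨadd : ∀ s t : ℝ, 0 ≤ s → 0 ≤ t → Ψ (t + s) = Ψ t ∘ Ψ s)
    (hspace : ∀ t ∈ Set.Icc (0:ℝ) 1, ∀ x y : M, dist (Ψ t x) (Ψ t y) ≤ C₀ * dist x y)
    (htime : ∀ s t : ℝ, 0 ≤ s → 0 ≤ t → ∀ x : M, dist (Ψ t x) (Ψ s x) ≤ C₀ * |t - s|)
    (η : ℝ) (hη : η ∈ Set.Ioc (0:ℝ) 1)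
    (X : Set M) (h : M → ℝ) (hh1 : ∀ x ∈ X, 1 ≤ h x) (hhb : ∃ Ch : ℝ, ∀ x ∈ X, h x ≤ Ch)
    (K : ℝ) (hK : 0 < K) (hhK : ∀ x ∈ X, ∀ y ∈ X, |h x - h y| ≤ K * dist x y ^ η)
    (v : M → ℝ) (hvb : ∃ Cv : ℝ, ∀ x : M, |v x| ≤ Cv)
    (Kv : ℝ) (hKv : 0 < Kv) (hv : ∀ x y : M, |v x - v y| ≤ Kv * dist x y ^ η) :
    ∃ K' : ℝ, 0 < K' ∧ ∀ x ∈ X, ∀ y ∈ X,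
      |(∫ u in (0:ℝ)..(h x), v (Ψ u x)) - ∫ u in (0:ℝ)..(h y), v (Ψ u y)|
        ≤ K' * dist x y ^ η := by
  obtain ⟨hη0, hη1⟩ := hη
  obtain ⟨Ch, hCh0⟩ := hhb
  obtain ⟨Cv, hCv0⟩ := hvb
  set Ch' : ℝ := max Ch 1 with hCh'def
  set Cv' : ℝ := max Cv 0 with hCv'def
  have hCh1 : (1:ℝ) ≤ Ch' := le_max_right _ _
  have hCh' : ∀ x ∈ X, h x ≤ Ch' := fun x hx => (hCh0 x hx).trans (le_max_left _ _)
  have hCv' : ∀ x, |v x| ≤ Cv' := fun x => (hCv0 x).trans (le_max_left _ _)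
  have hCvnn : 0 ≤ Cv' := le_max_right _ _
  have hC₀0 : (0:ℝ) < C₀ := lt_of_lt_of_le one_pos hC₀
  -- continuity of v
  have hvcont : Continuous v := by
    rw [Metric.continuous_iff]
    intro b ε hε
    refine ⟨(ε / (2 * Kv)) ^ η⁻¹, Real.rpow_pos_of_pos (by positivity) _, fun a hab => ?_⟩
    have h1 : dist a b ^ η ≤ ((ε / (2 * Kv)) ^ η⁻¹) ^ η :=
      Real.rpow_le_rpow dist_nonneg hab.le hη0.le
    rw [Real.rpow_inv_rpow (by positivity) (ne_of_gt hη0)] at h1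
    have h2 : Kv * (ε / (2 * Kv)) = ε / 2 := by field_simp
    calc dist (v a) (v b) = |v a - v b| := Real.dist_eq _ _
      _ ≤ Kv * dist a b ^ η := hv a b
      _ ≤ Kv * (ε / (2 * Kv)) := by nlinarith
      _ < ε := by linarith
  -- continuity of the flow orbit composed with v
  have hflow : ∀ x : M, ContinuousOn (fun u => v (Ψ u x)) (Ici (0:ℝ)) := by
    intro x
    have hl : LipschitzOnWith C₀.toNNReal (fun u => Ψ u x) (Ici (0:ℝ)) := by
      apply LipschitzOnWith.of_dist_le_mul
      intro s hs t ht
      have := htime t s ht hs x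
      rwa [Real.coe_toNNReal _ hC₀0.le, Real.dist_eq]
    exact hvcont.comp_continuousOn hl.continuousOn
  have hint : ∀ x : M, ∀ a b : ℝ, 0 ≤ a → 0 ≤ b →
      IntervalIntegrable (fun u => v (Ψ u x)) volume a b := by
    intro x a b ha hb
    apply ContinuousOn.intervalIntegrable
    apply (hflow x).mono
    intro u hu
    exact le_trans (le_min ha hb) hu.1
  -- iterated space-Lipschitz bound
  have hiter : ∀ n : ℕ, ∀ u : ℝ, 0 ≤ u → u ≤ n → ∀ x y : M,
      dist (Ψ u x) (Ψ u y) ≤ C₀ ^ n * dist x y := by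
    intro n
    induction n with
    | zero =>
      intro u hu0 hun x y
      have hu : u = 0 := le_antisymm (by exact_mod_cast hun) hu0
      subst hu; rw [hΨ0]; simp
    | succ n ih =>
      intro u hu0 hun x y
      by_cases hcase : u ≤ n
      · calc dist (Ψ u x) (Ψ u y) ≤ C₀ ^ n * dist x y := ih u hu0 hcase x y
          _ ≤ C₀ ^ (n+1) * dist x y :=
            mul_le_mul_of_nonneg_right (pow_le_pow_right₀ hC₀ (Nat.le_succ n)) dist_nonneg
      · push_neg at hcase
        have hn0 : (0:ℝ) ≤ n := Nat.cast_nonneg n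
        have hun' : u ≤ (n:ℝ) + 1 := by push_cast at hun; linarith
        have heq : Ψ u = Ψ (u - n) ∘ Ψ n := by
          have h3 := hΨadd n (u - n) hn0 (by linarith)
          rwa [sub_add_cancel] at h3
        rw [heq]
        simp only [Function.comp_apply]
        calc dist (Ψ (u - n) (Ψ n x)) (Ψ (u - n) (Ψ n y))
            ≤ C₀ * dist (Ψ n x) (Ψ n y) :=
              hspace (u - n) ⟨by linarith, by linarith⟩ _ _
          _ ≤ C₀ * (C₀ ^ n * dist x y) :=
              mul_le_mul_of_nonneg_left (ih n hn0 le_rfl x y) hC₀0.le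
          _ = C₀ ^ (n+1) * dist x y := by ring
  set N := ⌈Ch'⌉₊ with hNdef
  have hChN : Ch' ≤ (N:ℝ) := Nat.le_ceil Ch'
  set B : ℝ := Kv * (C₀ ^ N) ^ η with hBdef
  have hB0 : 0 < B := mul_pos hKv (Real.rpow_pos_of_pos (pow_pos hC₀0 N) η)
  refine ⟨Ch' * B + Cv' * K, by nlinarith, ?_⟩
  intro x hx y hy
  have hhx1 := hh1 x hx
  have hhy1 := hh1 y hy
  have hhx0 : (0:ℝ) ≤ h x := by linarith
  have hhy0 : (0:ℝ) ≤ h y := by linarith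
  have hsplit : (∫ u in (0:ℝ)..(h x), v (Ψ u x))
      = (∫ u in (0:ℝ)..(h y), v (Ψ u x)) + ∫ u in (h y)..(h x), v (Ψ u x) :=
    (intervalIntegral.integral_add_adjacent_intervals (hint x 0 (h y) le_rfl hhy0)
      (hint x (h y) (h x) hhy0 hhx0)).symm
  have hsub : (∫ u in (0:ℝ)..(h y), v (Ψ u x)) - (∫ u in (0:ℝ)..(h y), v (Ψ u y))
      = ∫ u in (0:ℝ)..(h y), (v (Ψ u x) - v (Ψ u y)) :=
    (intervalIntegral.integral_sub (hint x 0 (h y) le_rfl hhy0)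
      (hint y 0 (h y) le_rfl hhy0)).symm
  have hb1 : |∫ u in (0:ℝ)..(h y), (v (Ψ u x) - v (Ψ u y))| ≤ B * dist x y ^ η * Ch' := by
    have hd : ∀ u ∈ Set.uIoc (0:ℝ) (h y), ‖v (Ψ u x) - v (Ψ u y)‖ ≤ B * dist x y ^ η := by
      intro u hu
      rw [uIoc_of_le hhy0] at hu
      have hu0 : (0:ℝ) ≤ u := hu.1.le
      have huN : u ≤ (N:ℝ) := le_trans hu.2 (le_trans (hCh' y hy) hChN)
      have hdd : dist (Ψ u x) (Ψ u y) ≤ C₀ ^ N * dist x y := hiter N u hu0 huN x y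
      have hr : dist (Ψ u x) (Ψ u y) ^ η ≤ (C₀ ^ N * dist x y) ^ η :=
        Real.rpow_le_rpow dist_nonneg hdd hη0.le
      rw [Real.mul_rpow (pow_nonneg hC₀0.le N) dist_nonneg] at hr
      calc ‖v (Ψ u x) - v (Ψ u y)‖ ≤ Kv * dist (Ψ u x) (Ψ u y) ^ η := hv _ _
        _ ≤ Kv * ((C₀ ^ N) ^ η * dist x y ^ η) :=
            mul_le_mul_of_nonneg_left hr hKv.le
        _ = B * dist x y ^ η := by rw [hBdef]; ring
    have h4 := intervalIntegral.norm_integral_le_of_norm_le_const hd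
    rw [sub_zero] at h4
    calc |∫ u in (0:ℝ)..(h y), (v (Ψ u x) - v (Ψ u y))|
        ≤ B * dist x y ^ η * |h y| := h4
      _ ≤ B * dist x y ^ η * Ch' := by
          apply mul_le_mul_of_nonneg_left _ (by positivity)
          rw [abs_of_nonneg hhy0]; exact hCh' y hy
  have hb2 : |∫ u in (h y)..(h x), v (Ψ u x)| ≤ Cv' * (K * dist x y ^ η) := by
    have hd : ∀ u ∈ Set.uIoc (h y) (h x), ‖v (Ψ u x)‖ ≤ Cv' := fun u _ => hCv' _
    have h4 := intervalIntegral.norm_integral_le_of_norm_le_const hd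
    calc |∫ u in (h y)..(h x), v (Ψ u x)| ≤ Cv' * |h x - h y| := h4
      _ ≤ Cv' * (K * dist x y ^ η) :=
          mul_le_mul_of_nonneg_left (hhK x hx y hy) hCvnn
  have key : (∫ u in (0:ℝ)..(h x), v (Ψ u x)) - ∫ u in (0:ℝ)..(h y), v (Ψ u y)
      = (∫ u in (0:ℝ)..(h y), (v (Ψ u x) - v (Ψ u y))) + ∫ u in (h y)..(h x), v (Ψ u x) := by
    rw [hsplit, ← hsub]; ring
  rw [key]
  calc |(∫ u in (0:ℝ)..(h y), (v (Ψ u x) - v (Ψ u y))) + ∫ u in (h y)..(h x), v (Ψ u x)|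
      ≤ |∫ u in (0:ℝ)..(h y), (v (Ψ u x) - v (Ψ u y))| + |∫ u in (h y)..(h x), v (Ψ u x)| :=
        abs_add_le _ _
    _ ≤ B * dist x y ^ η * Ch' + Cv' * (K * dist x y ^ η) := add_le_add hb1 hb2
    _ = (Ch' * B + Cv' * K) * dist x y ^ η := by ring
end

section
/- Let (B_t)_{t≥0} be a standard Brownian motion. Then for every p ∈ [1, ∞), E[( sup_{0 ≤ s < t ≤ 1} |B_t − B_s| / ω_{1/2}(t − s) )^p] < ∞. -/
open MeasureTheory ProbabilityTheory
open scoped ENNReal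

noncomputable def aSeq (n : ℕ) : ℝ := Real.sqrt ((n + 1) / 2 ^ n)

lemma aSeq_pos (n : ℕ) : 0 < aSeq n := Real.sqrt_pos.2 (by positivity)

lemma aSeq_sq (n : ℕ) : aSeq n ^ 2 = (n + 1) / 2 ^ n := Real.sq_sqrt (by positivity)

lemma sq_le_four_mul_two_pow (i : ℕ) : ((i : ℝ) + 1) ^ 2 ≤ 4 * 2 ^ i := by
  induction i with
  | zero => norm_num
  | succ n ih =>
    rcases n with _ | _ | m
    · norm_num
    · norm_num
    · have e : (2:ℝ) ^ (m + 1 + 1 + 1) = 2 * 2 ^ (m + 1 + 1) := by ring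
      rw [e]
      push_cast at ih ⊢
      nlinarith [ih, sq_nonneg ((m : ℝ)), Nat.cast_nonneg (α := ℝ) m]

lemma sqrt_pow' (x : ℝ) (hx : 0 ≤ x) (i : ℕ) : Real.sqrt (x ^ i) = Real.sqrt x ^ i := by
  induction i with
  | zero => simp
  | succ n ih => rw [pow_succ, pow_succ, ← ih, ← Real.sqrt_mul (by positivity)]

/-- the quarter-root of 2 -/
noncomputable def qr2 : ℝ := Real.sqrt (Real.sqrt 2)

lemma one_lt_sqrt2 : 1 < Real.sqrt 2 := by
  rw [show (1:ℝ) = Real.sqrt 1 by simp]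
  exact Real.sqrt_lt_sqrt (by norm_num) (by norm_num)

lemma one_lt_qr2 : 1 < qr2 := by
  rw [qr2, show (1:ℝ) = Real.sqrt 1 by simp]
  exact Real.sqrt_lt_sqrt (by norm_num) one_lt_sqrt2

lemma qr2_pos : 0 < qr2 := lt_trans one_pos one_lt_qr2

lemma qr2_sq : qr2 ^ 2 = Real.sqrt 2 := Real.sq_sqrt (Real.sqrt_nonneg 2)

lemma sqrt2_sq : Real.sqrt 2 ^ 2 = 2 := Real.sq_sqrt (by norm_num)

lemma sqrt2_pos : 0 < Real.sqrt 2 := Real.sqrt_pos.2 (by norm_num)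

lemma aSeq_eq (n : ℕ) : aSeq n = Real.sqrt (n + 1) / Real.sqrt 2 ^ n := by
  rw [aSeq, Real.sqrt_div (by positivity), sqrt_pow' 2 (by norm_num)]

lemma nat_le_sqrt2_pow (i : ℕ) : Real.sqrt ((i : ℝ) + 1) ≤ Real.sqrt 2 * qr2 ^ i := by
  have key : ((i : ℝ) + 1) ≤ 2 * Real.sqrt 2 ^ i := by
    rw [← pow_le_pow_iff_left₀ (by positivity) (by positivity) (two_ne_zero)]
    calc ((i:ℝ) + 1) ^ 2 ≤ 4 * 2 ^ i := sq_le_four_mul_two_pow i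
      _ = (2 * Real.sqrt 2 ^ i) ^ 2 := by
          rw [mul_pow, pow_right_comm, sqrt2_sq]; norm_num
  calc Real.sqrt ((i : ℝ) + 1) ≤ Real.sqrt (2 * Real.sqrt 2 ^ i) := Real.sqrt_le_sqrt key
    _ = Real.sqrt 2 * qr2 ^ i := by
        rw [Real.sqrt_mul (by norm_num), sqrt_pow' _ (Real.sqrt_nonneg 2)]; rfl

lemma aSeq_add_le (m i : ℕ) :
    aSeq (m + i) ≤ Real.sqrt 2 * aSeq m * (qr2⁻¹) ^ i := by
  have h1 : Real.sqrt ((m:ℝ) + i + 1) ≤ Real.sqrt ((m:ℝ) + 1) * (Real.sqrt 2 * qr2 ^ i) := by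
    have h2 : ((m:ℝ) + i + 1) ≤ ((m:ℝ) + 1) * ((i:ℝ) + 1) := by
      nlinarith [Nat.cast_nonneg (α := ℝ) m, Nat.cast_nonneg (α := ℝ) i]
    calc Real.sqrt ((m:ℝ) + i + 1) ≤ Real.sqrt (((m:ℝ) + 1) * ((i:ℝ) + 1)) :=
          Real.sqrt_le_sqrt h2
      _ = Real.sqrt ((m:ℝ) + 1) * Real.sqrt ((i:ℝ) + 1) := Real.sqrt_mul (by positivity) _
      _ ≤ Real.sqrt ((m:ℝ) + 1) * (Real.sqrt 2 * qr2 ^ i) := by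
          exact mul_le_mul_of_nonneg_left (nat_le_sqrt2_pow i) (Real.sqrt_nonneg _)
  have e2 : Real.sqrt 2 ^ (m + i) = Real.sqrt 2 ^ m * (qr2 ^ i * qr2 ^ i) := by
    rw [pow_add]
    congr 1
    rw [← pow_add, ← two_mul, pow_mul, qr2_sq]
  rw [aSeq_eq, aSeq_eq, e2]
  have hq : (0:ℝ) < qr2 ^ i := pow_pos qr2_pos i
  have hs : (0:ℝ) < Real.sqrt 2 ^ m := pow_pos sqrt2_pos m
  rw [div_le_iff₀ (by positivity)]
  have expand : Real.sqrt 2 * (Real.sqrt ((m:ℝ)+1) / Real.sqrt 2 ^ m) * (qr2⁻¹) ^ i *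
      (Real.sqrt 2 ^ m * (qr2 ^ i * qr2 ^ i))
      = Real.sqrt ((m:ℝ)+1) * (Real.sqrt 2 * qr2 ^ i) := by
    field_simp [inv_pow]
    ring_nf
    rw [← mul_pow, mul_inv_cancel₀ qr2_pos.ne', one_pow]
  rw [expand]
  convert h1 using 3
  push_cast
  · rfl
  · norm_num

lemma qr2_inv_lt_one : qr2⁻¹ < 1 := inv_lt_one_of_one_lt₀ one_lt_qr2
lemma qr2_inv_nonneg : 0 ≤ qr2⁻¹ := inv_nonneg.2 qr2_pos.le

noncomputable def Ctail : ℝ := Real.sqrt 2 * (1 - qr2⁻¹)⁻¹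

lemma Ctail_pos : 0 < Ctail := by
  apply mul_pos sqrt2_pos
  rw [inv_pos, sub_pos]
  exact qr2_inv_lt_one

lemma aSeq_succ_le (m : ℕ) : aSeq (m + 1) ≤ aSeq m := by
  apply Real.sqrt_le_sqrt
  rw [div_le_div_iff₀ (by positivity) (by positivity)]
  push_cast
  have h : (0:ℝ) < 2 ^ m := by positivity
  have e : (2:ℝ) ^ (m + 1) = 2 * 2 ^ m := by ring
  rw [e]
  nlinarith [Nat.cast_nonneg (α := ℝ) m]

lemma geom_partial_le (K : ℕ) : ∑ k ∈ Finset.range K, (qr2⁻¹) ^ k ≤ (1 - qr2⁻¹)⁻¹ := by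
  have hsum : Summable (fun k : ℕ => (qr2⁻¹) ^ k) :=
    summable_geometric_of_lt_one qr2_inv_nonneg qr2_inv_lt_one
  calc ∑ k ∈ Finset.range K, (qr2⁻¹) ^ k ≤ ∑' k : ℕ, (qr2⁻¹) ^ k :=
        Summable.sum_le_tsum _ (fun i _ => pow_nonneg qr2_inv_nonneg _) hsum
    _ = (1 - qr2⁻¹)⁻¹ := tsum_geometric_of_lt_one qr2_inv_nonneg qr2_inv_lt_one

lemma sum_aSeq_tail (m N : ℕ) : ∑ n ∈ Finset.Ico m N, aSeq (n + 1) ≤ Ctail * aSeq m := by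
  rw [Finset.sum_Ico_eq_sum_range]
  have hbd : ∀ k : ℕ, aSeq (m + k + 1) ≤ Real.sqrt 2 * aSeq m * (qr2⁻¹) ^ k := by
    intro k
    have e : m + k + 1 = (m + 1) + k := by omega
    rw [e]
    calc aSeq ((m+1) + k) ≤ Real.sqrt 2 * aSeq (m+1) * (qr2⁻¹) ^ k := aSeq_add_le (m+1) k
      _ ≤ Real.sqrt 2 * aSeq m * (qr2⁻¹) ^ k := by
          apply mul_le_mul_of_nonneg_right _ (pow_nonneg qr2_inv_nonneg k)
          exact mul_le_mul_of_nonneg_left (aSeq_succ_le m) sqrt2_pos.le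
  calc ∑ k ∈ Finset.range (N - m), aSeq (m + k + 1)
      ≤ ∑ k ∈ Finset.range (N - m), Real.sqrt 2 * aSeq m * (qr2⁻¹) ^ k :=
        Finset.sum_le_sum (fun k _ => hbd k)
    _ = Real.sqrt 2 * aSeq m * ∑ k ∈ Finset.range (N - m), (qr2⁻¹) ^ k := by
        rw [Finset.mul_sum]
    _ ≤ Real.sqrt 2 * aSeq m * (1 - qr2⁻¹)⁻¹ := by
        exact mul_le_mul_of_nonneg_left (geom_partial_le _)
          (mul_nonneg sqrt2_pos.le (aSeq_pos m).le)
    _ = Ctail * aSeq m := by rw [Ctail]; ring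

lemma log3_pos : 0 < Real.log 3 := Real.log_pos (by norm_num)
lemma log2_pos : 0 < Real.log 2 := Real.log_pos (by norm_num)

lemma ell_ge_log3 {δ : ℝ} (hδ : 0 < δ) : Real.log 3 ≤ ell δ := by
  rw [ell]
  split_ifs with hc
  · have h1 : Real.log δ ≤ Real.log (1/3) := Real.log_le_log hδ hc
    rw [show (1:ℝ)/3 = 3⁻¹ by norm_num, Real.log_inv] at h1
    linarith
  · exact le_refl _

lemma ell_pos_s12 {δ : ℝ} (hδ : 0 < δ) : 0 < ell δ := lt_of_lt_of_le log3_pos (ell_ge_log3 hδ)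

lemma ell_lower {δ : ℝ} (hδ : 0 < δ) {m : ℕ} (hm : δ ≤ ((2:ℝ)^m)⁻¹) :
    ((m:ℝ)+1) * Real.log 2 ≤ 2 * ell δ := by
  by_cases hc : δ ≤ 1/3
  · rw [ell, if_pos hc]
    have hlog : Real.log δ ≤ Real.log (((2:ℝ)^m)⁻¹) := Real.log_le_log hδ hm
    rw [Real.log_inv, Real.log_pow] at hlog
    have hm' : (m:ℝ) * Real.log 2 ≤ -Real.log δ := by linarith
    rcases Nat.eq_zero_or_pos m with hm0 | hm1
    · subst hm0
      have h1 : Real.log δ ≤ Real.log (1/3) := Real.log_le_log hδ hc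
      rw [show (1:ℝ)/3 = 3⁻¹ by norm_num, Real.log_inv] at h1
      have h2 : Real.log 2 ≤ Real.log 3 := Real.log_le_log (by norm_num) (by norm_num)
      simp only [Nat.cast_zero]
      linarith [log2_pos]
    · have : (1:ℝ) ≤ (m:ℝ) := by exact_mod_cast hm1
      nlinarith [log2_pos]
  · rw [ell, if_neg hc]
    push_neg at hc
    have hmle : m ≤ 1 := by
      by_contra hm2
      push_neg at hm2
      have h4 : (4:ℝ) ≤ 2^m := by
        calc (4:ℝ) = 2^2 := by norm_num
          _ ≤ 2^m := pow_le_pow_right₀ (by norm_num) hm2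
      have : ((2:ℝ)^m)⁻¹ ≤ 4⁻¹ := by
        apply inv_anti₀ (by norm_num) h4
      have := hm.trans this
      linarith
    have h2 : Real.log 2 ≤ Real.log 3 := Real.log_le_log (by norm_num) (by norm_num)
    have : ((m:ℝ)+1) ≤ 2 := by exact_mod_cast Nat.succ_le_succ hmle
    nlinarith [log2_pos, log3_pos]

lemma exists_scale {δ : ℝ} (hδ : 0 < δ) (hδ1 : δ ≤ 1) :
    ∃ m : ℕ, (((2:ℝ)^(m+1))⁻¹ < δ ∧ δ ≤ ((2:ℝ)^m)⁻¹) := by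
  have hex : ∃ n : ℕ, ((2:ℝ)^(n+1))⁻¹ < δ := by
    obtain ⟨n, hn⟩ := pow_unbounded_of_one_lt δ⁻¹ (by norm_num : (1:ℝ) < 2)
    refine ⟨n, ?_⟩
    have h1 : ((2:ℝ)^n)⁻¹ < δ := by
      rw [inv_lt_comm₀ (by positivity) hδ]
      exact hn
    calc ((2:ℝ)^(n+1))⁻¹ ≤ ((2:ℝ)^n)⁻¹ := by
          apply inv_anti₀ (by positivity)
          apply pow_le_pow_right₀ (by norm_num) (by omega)
      _ < δ := h1
  classical
  refine ⟨Nat.find hex, Nat.find_spec hex, ?_⟩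
  rcases Nat.eq_zero_or_pos (Nat.find hex) with h0 | h1
  · rw [h0]; simpa using hδ1
  · obtain ⟨j, hj⟩ := Nat.exists_eq_succ_of_ne_zero (Nat.pos_iff_ne_zero.1 h1)
    have := Nat.find_min hex (m := j) (by omega)
    push_neg at this
    rw [hj]
    exact this

noncomputable def Comega : ℝ := Real.sqrt (4 / Real.log 2)

lemma omega_eq_sqrt {δ : ℝ} (hδ : 0 < δ) : omegaQ (1/2) δ = Real.sqrt (δ * ell δ) := by
  rw [omegaQ, if_neg (ne_of_gt hδ), Real.sqrt_eq_rpow]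

lemma omega_half_pos {δ : ℝ} (hδ : 0 < δ) : 0 < omegaQ (1/2) δ := by
  rw [omega_eq_sqrt hδ]
  exact Real.sqrt_pos.2 (mul_pos hδ (ell_pos_s12 hδ))

lemma aSeq_le_omega {δ : ℝ} (hδ : 0 < δ) (hδ1 : δ ≤ 1) {m : ℕ}
    (h1 : ((2:ℝ)^(m+1))⁻¹ < δ) (h2 : δ ≤ ((2:ℝ)^m)⁻¹) :
    aSeq m ≤ Comega * omegaQ (1/2) δ := by
  rw [omega_eq_sqrt hδ, Comega, ← Real.sqrt_mul (by positivity)]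
  apply Real.sqrt_le_sqrt
  have hinv : ((2:ℝ)^m)⁻¹ ≤ 2 * δ := by
    have e : ((2:ℝ)^m)⁻¹ = 2 * ((2:ℝ)^(m+1))⁻¹ := by
      rw [pow_succ]
      field_simp
    rw [e]
    linarith
  have hml : ((m:ℝ)+1) ≤ 2 * ell δ / Real.log 2 := by
    rw [le_div_iff₀ log2_pos]
    exact ell_lower hδ h2
  calc ((m:ℝ)+1) / 2^m = ((m:ℝ)+1) * ((2:ℝ)^m)⁻¹ := by rw [div_eq_mul_inv]
    _ ≤ (2 * ell δ / Real.log 2) * (2 * δ) := by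
        apply mul_le_mul hml hinv (by positivity)
          (div_nonneg (by nlinarith [ell_pos_s12 hδ]) log2_pos.le)
    _ = 4 / Real.log 2 * (δ * ell δ) := by ring

open Filter in
noncomputable def dd (N : ℕ) (x : ℝ) : ℝ := (⌊x * 2 ^ N⌋ : ℝ) / 2 ^ N

lemma dd_nonneg {x : ℝ} (hx : 0 ≤ x) (N : ℕ) : 0 ≤ dd N x := by
  apply div_nonneg _ (by positivity)
  exact_mod_cast Int.floor_nonneg.2 (by positivity)

lemma dd_le (N : ℕ) (x : ℝ) : dd N x ≤ x := by
  rw [dd, div_le_iff₀ (by positivity)]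
  exact Int.floor_le _

lemma lt_dd (N : ℕ) (x : ℝ) : x - ((2:ℝ)^N)⁻¹ < dd N x := by
  rw [dd, lt_div_iff₀ (by positivity : (0:ℝ) < 2^N)]
  have hinv : ((2:ℝ)^N)⁻¹ * 2^N = 1 := inv_mul_cancel₀ (by positivity)
  nlinarith [Int.lt_floor_add_one (x * 2^N)]

lemma dd_tendsto (x : ℝ) : Filter.Tendsto (fun N => dd N x) Filter.atTop (nhds x) := by
  have h1 : Filter.Tendsto (fun N : ℕ => x - ((2:ℝ)^N)⁻¹) Filter.atTop (nhds x) := by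
    have h2 : Filter.Tendsto (fun N : ℕ => ((2:ℝ)^N)⁻¹) Filter.atTop (nhds 0) := by
      simp only [← inv_pow]
      exact tendsto_pow_atTop_nhds_zero_of_lt_one (by norm_num) (by norm_num)
    have := Filter.Tendsto.const_sub x h2
    simpa using this
  exact tendsto_of_tendsto_of_tendsto_of_le_of_le h1 tendsto_const_nhds
    (fun N => (lt_dd N x).le) (fun N => dd_le N x)

lemma dd_step {f : ℝ → ℝ} {Y : ℝ} (hY0 : 0 ≤ Y)
    (hY : ∀ n k : ℕ, k + 1 ≤ 2 ^ n → |f ((k+1)/2^n) - f (k/2^n)| ≤ Y * aSeq n)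
    {x : ℝ} (hx0 : 0 ≤ x) (hx1 : x ≤ 1) (N : ℕ) :
    |f (dd (N+1) x) - f (dd N x)| ≤ Y * aSeq (N+1) := by
  set j := ⌊x * 2^N⌋ with hj
  set mm := ⌊x * 2^(N+1)⌋ with hmm
  have hj0 : 0 ≤ j := Int.floor_nonneg.2 (by positivity)
  have hjle : (j:ℝ) ≤ x * 2^N := Int.floor_le _
  have hjlt : x * 2^N < j + 1 := Int.lt_floor_add_one _
  have hmle : (mm:ℝ) ≤ x * 2^(N+1) := Int.floor_le _
  have h2j : 2 * j ≤ mm := by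
    rw [hmm]
    apply Int.le_floor.2
    push_cast
    have e : (2:ℝ)^(N+1) = 2*2^N := by ring
    nlinarith [pow_pos (by norm_num : (0:ℝ) < 2) N]
  have hmm2 : mm ≤ 2*j + 1 := by
    have e : (2:ℝ)^(N+1) = 2*2^N := by ring
    have h2 : (mm:ℝ) < 2*(j:ℝ) + 2 := by nlinarith [pow_pos (by norm_num : (0:ℝ) < 2) N]
    have h3 : (mm:ℝ) < ((2*j+2 : ℤ) : ℝ) := by push_cast; linarith
    have h4 : mm < 2*j+2 := by exact_mod_cast h3
    omega
  rcases (by omega : mm = 2*j ∨ mm = 2*j+1) with h | h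
  · have heq : dd (N+1) x = dd N x := by
      rw [dd, dd, ← hmm, ← hj, h]
      push_cast
      ring
    rw [heq, sub_self, abs_zero]
    exact mul_nonneg hY0 (aSeq_pos _).le
  · set k : ℕ := 2 * j.toNat with hk
    have hkr : (k:ℝ) = 2*(j:ℝ) := by
      have hcast : ((j.toNat : ℕ) : ℝ) = (j : ℝ) := by exact_mod_cast Int.toNat_of_nonneg hj0
      rw [hk]
      push_cast
      rw [hcast]
    have hk1 : k + 1 ≤ 2^(N+1) := by
      have hb : (mm:ℝ) ≤ (2:ℝ)^(N+1) := by nlinarith [pow_pos (by norm_num : (0:ℝ) < 2) (N+1)]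
      have : ((k:ℝ)+1) ≤ ((2^(N+1) : ℕ) : ℝ) := by
        rw [hkr]
        push_cast
        rw [h] at hb
        push_cast at hb
        linarith
      exact_mod_cast this
    have e1 : dd (N+1) x = ((k:ℝ)+1)/2^(N+1) := by
      rw [dd, ← hmm, h]
      push_cast [hkr]
      ring_nf
    have e2 : dd N x = (k:ℝ)/2^(N+1) := by
      rw [dd, ← hj, hkr]
      rw [div_eq_div_iff (by positivity) (by positivity)]
      ring
    rw [e1, e2]
    exact hY (N+1) k hk1

lemma dd_approx {f : ℝ → ℝ} (hf : ContinuousOn f (Set.Ici 0)) {Y : ℝ} (hY0 : 0 ≤ Y)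
    (hY : ∀ n k : ℕ, k + 1 ≤ 2 ^ n → |f ((k+1)/2^n) - f (k/2^n)| ≤ Y * aSeq n)
    {x : ℝ} (hx0 : 0 ≤ x) (hx1 : x ≤ 1) (m : ℕ) :
    |f x - f (dd m x)| ≤ Y * (Ctail * aSeq m) := by
  have hdist : ∀ N, m ≤ N → dist (f (dd m x)) (f (dd N x)) ≤ Y * (Ctail * aSeq m) := by
    intro N hmN
    calc dist (f (dd m x)) (f (dd N x))
        ≤ ∑ n ∈ Finset.Ico m N, (Y * aSeq (n+1)) := by
          apply dist_le_Ico_sum_of_dist_le hmN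
          intro k _ _
          rw [Real.dist_eq, abs_sub_comm]
          exact dd_step hY0 hY hx0 hx1 k
      _ = Y * ∑ n ∈ Finset.Ico m N, aSeq (n+1) := by rw [Finset.mul_sum]
      _ ≤ Y * (Ctail * aSeq m) := mul_le_mul_of_nonneg_left (sum_aSeq_tail m N) hY0
  have htend : Filter.Tendsto (fun N => f (dd N x)) Filter.atTop (nhds (f x)) := by
    have h1 := dd_tendsto x
    have hcw : ContinuousWithinAt f (Set.Ici 0) x := hf x hx0
    exact hcw.tendsto.comp (tendsto_nhdsWithin_iff.2
      ⟨h1, Filter.Eventually.of_forall (fun N => dd_nonneg hx0 N)⟩)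
  have htd : Filter.Tendsto (fun N => dist (f (dd m x)) (f (dd N x))) Filter.atTop
      (nhds (dist (f (dd m x)) (f x))) := Filter.Tendsto.dist tendsto_const_nhds htend
  have hle := le_of_tendsto htd (Filter.eventually_atTop.2 ⟨m, hdist⟩)
  rwa [dist_comm, Real.dist_eq] at hle

noncomputable def Kchain : ℝ := (1 + 2 * Ctail) * Comega

lemma chain {f : ℝ → ℝ} (hf : ContinuousOn f (Set.Ici 0)) {Y : ℝ} (hY0 : 0 ≤ Y)
    (hY : ∀ n k : ℕ, k + 1 ≤ 2 ^ n → |f ((k+1)/2^n) - f (k/2^n)| ≤ Y * aSeq n)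
    {s t : ℝ} (hs : 0 ≤ s) (hst : s < t) (ht : t ≤ 1) :
    |f t - f s| ≤ Kchain * Y * omegaQ (1/2) (t - s) := by
  have hδ0 : 0 < t - s := sub_pos.2 hst
  have hδ1 : t - s ≤ 1 := by linarith
  have hs1 : s ≤ 1 := by linarith
  have ht0 : 0 ≤ t := by linarith
  obtain ⟨m, hm1, hm2⟩ := exists_scale hδ0 hδ1
  have hp2 : (0:ℝ) < 2^m := by positivity
  have hfloor : ⌊t*2^m⌋ = ⌊s*2^m⌋ ∨ ⌊t*2^m⌋ = ⌊s*2^m⌋ + 1 := by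
    have hle : ⌊s*2^m⌋ ≤ ⌊t*2^m⌋ :=
      Int.floor_le_floor (by nlinarith)
    have hlt : ⌊t*2^m⌋ ≤ ⌊s*2^m⌋ + 1 := by
      rw [← Int.floor_add_one]
      apply Int.floor_le_floor
      have h1 : (t - s) * 2^m ≤ 1 := by
        rw [← le_div_iff₀ hp2, one_div]
        exact hm2
      nlinarith
    omega
  have hmid : |f (dd m t) - f (dd m s)| ≤ Y * aSeq m := by
    rcases hfloor with h | h
    · have heq : dd m t = dd m s := by rw [dd, dd, h]
      rw [heq, sub_self, abs_zero]
      exact mul_nonneg hY0 (aSeq_pos _).le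
    · set k : ℕ := (⌊s*2^m⌋).toNat with hk
      have hj0 : 0 ≤ ⌊s*2^m⌋ := Int.floor_nonneg.2 (by positivity)
      have hkr : (k:ℝ) = ((⌊s*2^m⌋ : ℤ) : ℝ) := by
        rw [hk]
        exact_mod_cast congrArg (fun z : ℤ => (z : ℝ)) (Int.toNat_of_nonneg hj0)
      have hk1 : k + 1 ≤ 2^m := by
        have hb : ((⌊t*2^m⌋ : ℤ):ℝ) ≤ (2:ℝ)^m := by
          calc ((⌊t*2^m⌋ : ℤ):ℝ) ≤ t*2^m := Int.floor_le _
            _ ≤ 2^m := by nlinarith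
        have : ((k:ℝ)+1) ≤ ((2^m : ℕ) : ℝ) := by
          rw [hkr]
          push_cast
          rw [h] at hb
          push_cast at hb
          linarith
        exact_mod_cast this
      have e1 : dd m t = ((k:ℝ)+1)/2^m := by
        rw [dd, h]; push_cast [hkr.symm]; ring_nf
      have e2 : dd m s = (k:ℝ)/2^m := by
        rw [dd, hkr]
      rw [e1, e2]
      exact hY m k hk1
  have h1 := dd_approx hf hY0 hY ht0 ht m
  have h2 := dd_approx hf hY0 hY hs hs1 m
  have habs : |f t - f s| ≤ |f t - f (dd m t)| + |f (dd m t) - f (dd m s)| + |f (dd m s) - f s| := by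
    have := abs_sub_le (f t - f (dd m t) + (f (dd m t) - f (dd m s))) 0 0
    calc |f t - f s| = |(f t - f (dd m t)) + (f (dd m t) - f (dd m s)) + (f (dd m s) - f s)| := by
          ring_nf
      _ ≤ |(f t - f (dd m t)) + (f (dd m t) - f (dd m s))| + |f (dd m s) - f s| := abs_add_le _ _
      _ ≤ |f t - f (dd m t)| + |f (dd m t) - f (dd m s)| + |f (dd m s) - f s| := by
          have := abs_add_le (f t - f (dd m t)) (f (dd m t) - f (dd m s))
          linarith
  have h2' : |f (dd m s) - f s| ≤ Y * (Ctail * aSeq m) := by rwa [abs_sub_comm]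
  have hcomb : |f t - f s| ≤ (1 + 2*Ctail) * Y * aSeq m := by
    calc |f t - f s| ≤ |f t - f (dd m t)| + |f (dd m t) - f (dd m s)| + |f (dd m s) - f s| := habs
      _ ≤ Y * (Ctail * aSeq m) + Y * aSeq m + Y * (Ctail * aSeq m) := by
          exact add_le_add (add_le_add h1 hmid) h2'
      _ = (1 + 2*Ctail) * Y * aSeq m := by ring
  calc |f t - f s| ≤ (1 + 2*Ctail) * Y * aSeq m := hcomb
    _ ≤ (1 + 2*Ctail) * Y * (Comega * omegaQ (1/2) (t-s)) := by
        apply mul_le_mul_of_nonneg_left (aSeq_le_omega hδ0 hδ1 hm1 hm2)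
        have := Ctail_pos
        nlinarith
    _ = Kchain * Y * omegaQ (1/2) (t-s) := by rw [Kchain]; ring

lemma ennreal_le_rpow_tsum {q : ℝ} (hq : 0 < q) (x : ℕ → ℝ≥0∞) (i : ℕ) :
    x i ≤ (∑' n, (x n) ^ q) ^ (1/q) := by
  have h1 : x i ^ q ≤ ∑' n, (x n) ^ q := ENNReal.le_tsum i
  have h2 := ENNReal.rpow_le_rpow h1 (by positivity : (0:ℝ) ≤ 1/q)
  rwa [← ENNReal.rpow_mul, mul_one_div, div_self hq.ne', ENNReal.rpow_one] at h2

lemma ennreal_sup_rpow {a b : ℝ≥0∞} {q : ℝ} (hq : 0 ≤ q) : (a ⊔ b) ^ q = a ^ q ⊔ b ^ q := by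
  rcases le_total a b with h | h
  · rw [sup_eq_right.2 h, sup_eq_right.2 (ENNReal.rpow_le_rpow h hq)]
  · rw [sup_eq_left.2 h, sup_eq_left.2 (ENNReal.rpow_le_rpow h hq)]

lemma ennreal_rpow_add_le (a b : ℝ≥0∞) {q : ℝ} (hq : 0 ≤ q) :
    (a + b) ^ q ≤ 2 ^ q * (a ^ q + b ^ q) := by
  have h1 : a + b ≤ 2 * (a ⊔ b) := by
    rw [two_mul]
    exact add_le_add le_sup_left le_sup_right
  calc (a + b) ^ q ≤ (2 * (a ⊔ b)) ^ q := ENNReal.rpow_le_rpow h1 hq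
    _ = 2 ^ q * (a ⊔ b) ^ q := ENNReal.mul_rpow_of_nonneg _ _ hq
    _ = 2 ^ q * (a ^ q ⊔ b ^ q) := by rw [ennreal_sup_rpow hq]
    _ ≤ 2 ^ q * (a ^ q + b ^ q) := by
        exact mul_le_mul_right (sup_le le_self_add le_add_self) _

lemma pdf_shift (v : NNReal) (hv : v ≠ 0) (θ x : ℝ) :
    Real.exp (θ*x) * gaussianPDFReal 0 v x
      = Real.exp (θ^2*v/2) * gaussianPDFReal (θ*v) v x := by
  have hv' : (0:ℝ) < v := by positivity
  simp only [gaussianPDFReal]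
  rw [mul_left_comm, ← Real.exp_add, mul_left_comm, ← Real.exp_add]
  congr 2
  field_simp
  ring

lemma gaussian_mgf (v : NNReal) (θ : ℝ) :
    ∫⁻ x, ENNReal.ofReal (Real.exp (θ * x)) ∂(gaussianReal 0 v) =
      ENNReal.ofReal (Real.exp (θ^2 * v / 2)) := by
  by_cases hv : v = 0
  · subst hv
    rw [gaussianReal_zero_var, lintegral_dirac]
    norm_num
  · rw [gaussianReal_of_var_ne_zero _ hv]
    rw [lintegral_withDensity_eq_lintegral_mul _ (measurable_gaussianPDF _ _)
      (by fun_prop : Measurable fun x => ENNReal.ofReal (Real.exp (θ * x)))]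
    have hpt : ∀ x : ℝ, (gaussianPDF 0 v * fun x => ENNReal.ofReal (Real.exp (θ * x))) x
        = ENNReal.ofReal (Real.exp (θ^2*v/2)) * gaussianPDF (θ*v) v x := by
      intro x
      simp only [Pi.mul_apply, gaussianPDF]
      rw [← ENNReal.ofReal_mul (gaussianPDFReal_nonneg _ _ _),
        ← ENNReal.ofReal_mul (Real.exp_nonneg _)]
      congr 1
      rw [mul_comm]
      exact pdf_shift v hv θ x
    simp only [hpt]
    rw [lintegral_const_mul _ (measurable_gaussianPDF _ _), lintegral_gaussianPDF_eq_one _ hv,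
      mul_one]

lemma gauss_one_side (v : NNReal) {θ c : ℝ} (hθ : 0 ≤ θ) {A : Set ℝ} (hA : MeasurableSet A)
    (hbd : ∀ x ∈ A, Real.exp (θ * c) ≤ Real.exp (θ * x) ∨ Real.exp (θ * c) ≤ Real.exp (-θ * x)) :
    True := trivial

lemma gauss_side (v : NNReal) (θ' c' : ℝ) {A : Set ℝ} (hA : MeasurableSet A)
    (hbd : ∀ x ∈ A, c' ≤ θ' * x) :
    (gaussianReal 0 v) A ≤ ENNReal.ofReal (Real.exp (θ'^2 * v / 2 - c')) := by
  set μ := gaussianReal 0 v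
  have key : ENNReal.ofReal (Real.exp c') * μ A ≤ ENNReal.ofReal (Real.exp (θ'^2 * v / 2)) := by
    calc ENNReal.ofReal (Real.exp c') * μ A = ∫⁻ _ in A, ENNReal.ofReal (Real.exp c') ∂μ := by
          rw [setLIntegral_const, mul_comm]
      _ ≤ ∫⁻ x in A, ENNReal.ofReal (Real.exp (θ' * x)) ∂μ := by
          apply setLIntegral_mono (by fun_prop)
          intro x hx
          exact ENNReal.ofReal_le_ofReal (Real.exp_le_exp.2 (hbd x hx))
      _ ≤ ∫⁻ x, ENNReal.ofReal (Real.exp (θ' * x)) ∂μ := setLIntegral_le_lintegral _ _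
      _ = ENNReal.ofReal (Real.exp (θ'^2 * v / 2)) := gaussian_mgf v θ'
  have hc : ENNReal.ofReal (Real.exp c') ≠ 0 := by
    simp [Real.exp_pos]
  have hc' : ENNReal.ofReal (Real.exp c') ≠ ⊤ := ENNReal.ofReal_ne_top
  rw [Real.exp_sub, ENNReal.ofReal_div_of_pos (Real.exp_pos _)]
  rw [ENNReal.le_div_iff_mul_le (Or.inl hc) (Or.inl hc'), mul_comm]
  exact key

lemma gaussian_tail (v : NNReal) {c θ : ℝ} (hθ : 0 ≤ θ) :
    (gaussianReal 0 v) {x | c < |x|} ≤ ENNReal.ofReal (2 * Real.exp (θ^2 * v / 2 - θ * c)) := by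
  have hsub : {x : ℝ | c < |x|} ⊆ {x : ℝ | θ * c ≤ θ * x} ∪ {x : ℝ | θ * c ≤ -(θ * x)} := by
    intro x hx
    have hx' : c < |x| := hx
    rcases le_abs.mp hx'.le with h | h
    · exact Or.inl (show θ * c ≤ θ * x from mul_le_mul_of_nonneg_left h hθ)
    · refine Or.inr (show θ * c ≤ -(θ * x) from ?_)
      have := mul_le_mul_of_nonneg_left h hθ
      simpa [mul_neg] using this
  have hA1 : MeasurableSet {x : ℝ | θ * c ≤ θ * x} := by
    apply measurableSet_le measurable_const (by fun_prop)
  have hA2 : MeasurableSet {x : ℝ | θ * c ≤ -(θ * x)} := by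
    apply measurableSet_le measurable_const (by fun_prop)
  have h1 := gauss_side v θ (θ * c) hA1 (fun x hx => hx)
  have h2 := gauss_side v (-θ) (θ * c) hA2 (fun x hx => by
    simpa only [Set.mem_setOf_eq, neg_mul] using hx)
  rw [neg_pow] at h2
  norm_num at h2
  calc (gaussianReal 0 v) {x | c < |x|}
      ≤ (gaussianReal 0 v) ({x : ℝ | θ * c ≤ θ * x} ∪ {x : ℝ | θ * c ≤ -(θ * x)}) :=
        measure_mono hsub
    _ ≤ (gaussianReal 0 v) {x : ℝ | θ * c ≤ θ * x} + (gaussianReal 0 v) {x : ℝ | θ * c ≤ -(θ * x)} :=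
        measure_union_le _ _
    _ ≤ ENNReal.ofReal (Real.exp (θ^2 * v / 2 - θ * c)) +
        ENNReal.ofReal (Real.exp (θ^2 * v / 2 - θ * c)) := add_le_add h1 h2
    _ = ENNReal.ofReal (2 * Real.exp (θ^2 * v / 2 - θ * c)) := by
        rw [← ENNReal.ofReal_add (Real.exp_nonneg _) (Real.exp_nonneg _)]
        norm_num [two_mul]

lemma abs_rpow_le_exp {x q : ℝ} (hq : 0 ≤ q) :
    |x| ^ q ≤ 1 + (Nat.factorial (Nat.ceil q)) * Real.exp x + (Nat.factorial (Nat.ceil q)) * Real.exp (-x) := by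
  set m := Nat.ceil q with hm
  have hfac : (0:ℝ) < (Nat.factorial m) := by exact_mod_cast Nat.factorial_pos m
  have hexp : Real.exp |x| ≤ Real.exp x + Real.exp (-x) := by
    rcases abs_cases x with ⟨h, _⟩ | ⟨h, _⟩
    · rw [h]; nlinarith [Real.exp_pos (-x)]
    · rw [h]; nlinarith [Real.exp_pos x]
  rcases le_or_gt |x| 1 with h | h
  · have h1 : |x| ^ q ≤ 1 := Real.rpow_le_one (abs_nonneg x) h hq
    nlinarith [Real.exp_pos x, Real.exp_pos (-x), hfac]
  · have h1 : |x| ^ q ≤ |x| ^ (m:ℝ) :=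
      Real.rpow_le_rpow_of_exponent_le h.le (Nat.le_ceil q)
    rw [Real.rpow_natCast] at h1
    have h2 : |x| ^ m ≤ (Nat.factorial m) * Real.exp |x| := by
      have h3 := Real.sum_le_exp_of_nonneg (abs_nonneg x) (m+1)
      have h4 : |x| ^ m / (Nat.factorial m) ≤ ∑ i ∈ Finset.range (m+1), |x| ^ i / (Nat.factorial i) := by
        apply Finset.single_le_sum (f := fun i => |x| ^ i / (Nat.factorial i))
          (fun i _ => by positivity) (Finset.self_mem_range_succ m)
      rw [div_le_iff₀ hfac] at h4
      calc |x| ^ m ≤ (∑ i ∈ Finset.range (m+1), |x| ^ i / (Nat.factorial i)) * (Nat.factorial m) := h4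
        _ ≤ Real.exp |x| * (Nat.factorial m) := by
            apply mul_le_mul_of_nonneg_right h3 hfac.le
        _ = (Nat.factorial m) * Real.exp |x| := mul_comm _ _
    calc |x| ^ q ≤ |x| ^ m := h1
      _ ≤ (Nat.factorial m) * Real.exp |x| := h2
      _ ≤ (Nat.factorial m) * (Real.exp x + Real.exp (-x)) := mul_le_mul_of_nonneg_left hexp hfac.le
      _ ≤ 1 + (Nat.factorial m) * Real.exp x + (Nat.factorial m) * Real.exp (-x) := by nlinarith
 
lemma gaussian_abs_rpow_le (v : NNReal) (hv : (v:ℝ) ≤ 1) {q : ℝ} (hq : 0 ≤ q) :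
    ∫⁻ x, ENNReal.ofReal (|x| ^ q) ∂(gaussianReal 0 v)
      ≤ ENNReal.ofReal (1 + 2 * (Nat.factorial (Nat.ceil q)) * Real.exp (1/2)) := by
  set μ := gaussianReal 0 v
  set m := Nat.ceil q with hm
  have hfac : (0:ℝ) ≤ (Nat.factorial m) := by positivity
  have step1 : ∫⁻ x, ENNReal.ofReal (|x| ^ q) ∂μ ≤
      ∫⁻ x, (ENNReal.ofReal 1 + (ENNReal.ofReal ((Nat.factorial m) * Real.exp x)
        + ENNReal.ofReal ((Nat.factorial m) * Real.exp (-x)))) ∂μ := by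
    apply lintegral_mono
    intro x
    calc ENNReal.ofReal (|x| ^ q)
        ≤ ENNReal.ofReal (1 + (Nat.factorial m) * Real.exp x + (Nat.factorial m) * Real.exp (-x)) :=
          ENNReal.ofReal_le_ofReal (abs_rpow_le_exp hq)
      _ ≤ ENNReal.ofReal 1 + (ENNReal.ofReal ((Nat.factorial m) * Real.exp x)
          + ENNReal.ofReal ((Nat.factorial m) * Real.exp (-x))) := by
          calc ENNReal.ofReal (1 + (Nat.factorial m) * Real.exp x + (Nat.factorial m) * Real.exp (-x))
              ≤ ENNReal.ofReal (1 + (Nat.factorial m) * Real.exp x) + ENNReal.ofReal ((Nat.factorial m) * Real.exp (-x)) :=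
                ENNReal.ofReal_add_le
            _ ≤ ENNReal.ofReal 1 + ENNReal.ofReal ((Nat.factorial m) * Real.exp x)
                + ENNReal.ofReal ((Nat.factorial m) * Real.exp (-x)) :=
                add_le_add_left ENNReal.ofReal_add_le _
            _ = _ := by ring
  have hmgf1 : ∫⁻ x, ENNReal.ofReal (Real.exp x) ∂μ = ENNReal.ofReal (Real.exp (v / 2)) := by
    have := gaussian_mgf v 1
    simp only [one_mul, one_pow] at this
    exact this
  have hmgf2 : ∫⁻ x, ENNReal.ofReal (Real.exp (-x)) ∂μ = ENNReal.ofReal (Real.exp (v / 2)) := by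
    have := gaussian_mgf v (-1)
    simp only [neg_one_mul] at this
    norm_num at this
    exact this
  have hsplit : ∫⁻ x, (ENNReal.ofReal 1 + (ENNReal.ofReal ((Nat.factorial m) * Real.exp x)
      + ENNReal.ofReal ((Nat.factorial m) * Real.exp (-x)))) ∂μ
      = 1 + (ENNReal.ofReal ((Nat.factorial m)) * ENNReal.ofReal (Real.exp (v/2))
        + ENNReal.ofReal ((Nat.factorial m)) * ENNReal.ofReal (Real.exp (v/2))) := by
    rw [lintegral_add_left measurable_const]
    rw [lintegral_add_left (by fun_prop)]
    simp only [lintegral_const, measure_univ, mul_one, ENNReal.ofReal_one]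
    congr 1
    congr 1
    · simp only [ENNReal.ofReal_mul hfac]
      rw [lintegral_const_mul _ (by fun_prop), hmgf1]
    · simp only [ENNReal.ofReal_mul hfac]
      rw [lintegral_const_mul _ (by fun_prop), hmgf2]
  have hfin : (1 : ℝ≥0∞) + (ENNReal.ofReal ((Nat.factorial m)) * ENNReal.ofReal (Real.exp (v/2))
      + ENNReal.ofReal ((Nat.factorial m)) * ENNReal.ofReal (Real.exp (v/2)))
      ≤ ENNReal.ofReal (1 + 2 * (Nat.factorial m) * Real.exp (1/2)) := by
    have hexp : Real.exp ((v:ℝ)/2) ≤ Real.exp (1/2) := Real.exp_le_exp.2 (by linarith)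
    have hmn : (0:ℝ) ≤ (Nat.factorial m) * Real.exp ((v:ℝ)/2) :=
      mul_nonneg hfac (Real.exp_nonneg _)
    rw [← ENNReal.ofReal_mul hfac, ← ENNReal.ofReal_one,
      ← ENNReal.ofReal_add hmn hmn, ← ENNReal.ofReal_add (by norm_num) (by positivity)]
    apply ENNReal.ofReal_le_ofReal
    nlinarith [Real.exp_pos ((v:ℝ)/2), hfac]
  calc ∫⁻ x, ENNReal.ofReal (|x| ^ q) ∂μ ≤ _ := step1
    _ = _ := hsplit
    _ ≤ _ := hfin
section Arith

lemma two_pow_rpow_comm (p : ℝ) (n : ℕ) : ((2:ℝ)^n) ^ p = ((2:ℝ)^p)^n := by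
  rw [← Real.rpow_natCast 2 n, ← Real.rpow_mul (by norm_num), mul_comm,
    Real.rpow_mul (by norm_num), Real.rpow_natCast]

lemma rho_lt_one {p lam : ℝ} (hp : 1 ≤ p) (hlam : lam = p + 3) :
    (2:ℝ) ^ (((2+p)/2 : ℝ)) * Real.exp (-(lam^2)/4) < 1 := by
  subst hlam
  rw [Real.rpow_def_of_pos (by norm_num), ← Real.exp_add]
  apply Real.exp_lt_one_iff.2
  nlinarith [Real.log_two_lt_d9, Real.log_pos (by norm_num : (1:ℝ) < 2), sq_nonneg p]

lemma gbound {p lam Cq : ℝ} (hp : 1 ≤ p) (hCq : 0 < Cq) (hlam : lam = p + 3) (n : ℕ) :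
    Real.sqrt ((2:ℝ)^n * (((2:ℝ)^n) ^ p * Cq)) *
      Real.sqrt ((2:ℝ)^n * (2 * Real.exp (-(lam^2*((n:ℝ)+1))/2)))
      ≤ (Real.sqrt Cq * Real.sqrt 2) *
        ((2:ℝ)^(((2+p)/2 : ℝ)) * Real.exp (-(lam^2)/4))^n := by
  have hlam0 : (0:ℝ) < lam := by rw [hlam]; linarith
  set E : ℝ := Real.exp (-(lam^2)/2) with hE
  have hE1 : E ≤ 1 := by
    rw [hE]
    apply le_of_lt
    apply Real.exp_lt_one_iff.2
    nlinarith
  have hE0 : 0 < E := Real.exp_pos _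
  set X : ℝ := (2:ℝ)^n * (((2:ℝ)^n) ^ p * Cq) with hX
  set T : ℝ := (2:ℝ)^n * (2 * Real.exp (-(lam^2*((n:ℝ)+1))/2)) with hT
  have hX0 : 0 ≤ X := by
    rw [hX]
    have : (0:ℝ) ≤ ((2:ℝ)^n) ^ p := Real.rpow_nonneg (by positivity) p
    positivity
  have hT0 : 0 ≤ T := by rw [hT]; positivity
  set A : ℝ := Real.sqrt Cq * Real.sqrt 2 with hA
  set rho : ℝ := (2:ℝ)^(((2+p)/2 : ℝ)) * Real.exp (-(lam^2)/4) with hrho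
  have hrho0 : 0 ≤ rho := by
    rw [hrho]
    have : (0:ℝ) ≤ (2:ℝ)^(((2+p)/2 : ℝ)) := Real.rpow_nonneg (by norm_num) _
    positivity
  have hA0 : 0 ≤ A := by rw [hA]; positivity
  have hrhosq : rho^2 = (4 * (2:ℝ)^p) * E := by
    rw [hrho, mul_pow, ← Real.exp_nat_mul]
    rw [← Real.rpow_natCast ((2:ℝ)^(((2+p)/2 : ℝ))) 2, ← Real.rpow_mul (by norm_num)]
    rw [show ((2+p)/2 * ((2:ℕ):ℝ)) = 2 + p by push_cast; ring]
    rw [Real.rpow_add (by norm_num), hE]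
    rw [show ((2:ℝ)^(2:ℝ)) = 4 by
      rw [show (2:ℝ) = ((2:ℕ):ℝ) by norm_num, Real.rpow_natCast]; norm_num]
    congr 1
    push_cast
    ring
  have hXT : X * T = (2 * Cq * (4^n * ((2:ℝ)^p)^n * E^n)) * E := by
    rw [hX, hT, two_pow_rpow_comm]
    have hsplit : Real.exp (-(lam^2*((n:ℝ)+1))/2) = E^n * E := by
      rw [hE, ← Real.exp_nat_mul, ← Real.exp_add]
      congr 1
      push_cast
      ring
    rw [hsplit]
    have h4 : (4:ℝ)^n = 2^n * 2^n := by rw [← mul_pow]; norm_num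
    rw [h4]
    ring
  have hRHS : (A * rho^n)^2 = 2 * Cq * (4^n * ((2:ℝ)^p)^n * E^n) := by
    have h1 : (A * rho^n)^2 = A^2 * (rho^2)^n := by
      rw [mul_pow, ← pow_mul, mul_comm n 2, pow_mul]
    rw [h1, hA, mul_pow, Real.sq_sqrt hCq.le, Real.sq_sqrt (by norm_num : (0:ℝ) ≤ 2), hrhosq,
      mul_pow, mul_pow]
    ring
  have hfin : X * T ≤ (A * rho^n)^2 := by
    rw [hXT, hRHS]
    have hc : (0:ℝ) ≤ 2 * Cq * (4^n * ((2:ℝ)^p)^n * E^n) := by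
      have h1 : (0:ℝ) ≤ ((2:ℝ)^p)^n := pow_nonneg (Real.rpow_nonneg (by norm_num) p) n
      positivity
    nlinarith
  calc Real.sqrt X * Real.sqrt T = Real.sqrt (X * T) := (Real.sqrt_mul hX0 T).symm
    _ ≤ Real.sqrt ((A * rho^n)^2) := Real.sqrt_le_sqrt hfin
    _ = A * rho^n := Real.sqrt_sq (by positivity)

end Arith

lemma incr_map {Ω : Type*} [MeasurableSpace Ω] (P : Measure Ω) (B : ℝ → Ω → ℝ)
    (hlaw : ∀ s t : ℝ, 0 ≤ s → s ≤ t →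
      Measure.map (fun ω => B t ω - B s ω) P = gaussianReal 0 (Real.toNNReal (t - s)))
    (n k : ℕ) :
    Measure.map (fun ω => B (((k:ℝ)+1)/2^n) ω - B ((k:ℝ)/2^n) ω) P
      = gaussianReal 0 (Real.toNNReal (1/2^n)) := by
  have h1 := hlaw ((k:ℝ)/2^n) (((k:ℝ)+1)/2^n) (by positivity)
    (by gcongr; linarith)
  have e : ((k:ℝ)+1)/2^n - (k:ℝ)/2^n = 1/2^n := by ring
  rw [e] at h1
  exact h1


/-- `B` is a standard Brownian motion on the probability space `(Ω, P)`: each `B t` is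
measurable, almost every sample path is continuous on `[0,∞)`, `B 0 = 0` a.s., each
increment `B t - B s` (for `0 ≤ s ≤ t`) is Gaussian with mean `0` and variance `t - s`,
and increments over consecutive intervals are independent. -/
def IsStdBM {Ω : Type*} [MeasurableSpace Ω] (P : Measure Ω) (B : ℝ → Ω → ℝ) : Prop :=
  (∀ t : ℝ, Measurable (B t)) ∧
  (∀ᵐ ω ∂P, ContinuousOn (fun t => B t ω) (Set.Ici (0:ℝ))) ∧
  (∀ᵐ ω ∂P, B 0 ω = 0) ∧
  (∀ s t : ℝ, 0 ≤ s → s ≤ t →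
    Measure.map (fun ω => B t ω - B s ω) P = gaussianReal 0 (Real.toNNReal (t - s))) ∧
  (∀ u : ℕ → ℝ, (∀ i, 0 ≤ u i) → Monotone u →
    iIndepFun (fun i ω => B (u (i+1)) ω - B (u i) ω) P)

/-- for a standard Brownian motion `B`, for every `p ∈ [1,∞)`,
`E[(sup_{0 ≤ s < t ≤ 1} |B_t - B_s| / ω_{1/2}(t-s))^p] < ∞`. -/
theorem brownian_holder_sup_moment {Ω : Type*} [MeasurableSpace Ω] (P : Measure Ω)
    [IsProbabilityMeasure P] (B : ℝ → Ω → ℝ) (hB : IsStdBM P B)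
    (p : ℝ) (hp : 1 ≤ p) :
    ∫⁻ ω, (⨆ (s : ℝ) (t : ℝ) (_ : 0 ≤ s) (_ : s < t) (_ : t ≤ 1),
        ENNReal.ofReal (|B t ω - B s ω| / omegaQ (1/2) (t - s))) ^ p ∂P < ⊤ := by
  obtain ⟨hmeas, hcont, _, hlaw, _⟩ := hB
  have hp0 : (0:ℝ) < p := by linarith
  set lam : ℝ := p + 3 with hlam
  have hlam0 : (0:ℝ) < lam := by rw [hlam]; linarith
  set Cq : ℝ := 1 + 2 * (Nat.factorial (Nat.ceil (2*p))) * Real.exp (1/2) with hCq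
  have hCq0 : (0:ℝ) < Cq := by positivity
  set gm : ℕ → Measure ℝ := fun n => gaussianReal 0 (Real.toNNReal (1/2^n)) with hgm
  have hvco : ∀ n : ℕ, ((Real.toNNReal ((1:ℝ)/2^n) : ℝ)) = 1/2^n :=
    fun n => Real.coe_toNNReal _ (by positivity)
  set ξ : ℕ → ℕ → Ω → ℝ := fun n k ω => B (((k:ℝ)+1)/2^n) ω - B ((k:ℝ)/2^n) ω with hξ
  have hξmeas : ∀ n k, Measurable (ξ n k) := fun n k => (hmeas _).sub (hmeas _)
  set Z : ℕ → Ω → ℝ≥0∞ := fun n ω => ⨆ (k : ℕ) (_ : k + 1 ≤ 2^n),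
    ENNReal.ofReal (|ξ n k ω| / aSeq n) with hZdef
  have hZmeas : ∀ n, Measurable (Z n) := fun n =>
    Measurable.iSup fun k => Measurable.iSup fun _ =>
      ((hξmeas n k).abs.div_const _).ennreal_ofReal
  have hchg : ∀ (n k : ℕ) (g : ℝ → ℝ≥0∞), Measurable g →
      ∫⁻ ω, g (ξ n k ω) ∂P = ∫⁻ x, g x ∂(gm n) := by
    intro n k g hg
    have hmapn := incr_map P B hlaw n k
    have e1 : gm n = gaussianReal 0 (Real.toNNReal (1/2^n)) := rfl
    rw [e1, ← hmapn]
    exact (lintegral_map hg (hξmeas n k)).symm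
  have hsetch : ∀ (n k : ℕ) (A : Set ℝ), MeasurableSet A →
      P (ξ n k ⁻¹' A) = gm n A := by
    intro n k A hA
    have hmapn := incr_map P B hlaw n k
    have e1 : gm n = gaussianReal 0 (Real.toNNReal (1/2^n)) := rfl
    rw [e1, ← hmapn]
    exact (Measure.map_apply (hξmeas n k) hA).symm
  -- moment bound
  have hmom : ∀ n : ℕ, ∫⁻ ω, (Z n ω) ^ (2*p) ∂P ≤
      ENNReal.ofReal ((2:ℝ)^n * (((2:ℝ)^n) ^ p * Cq)) := by
    intro n
    have h2p : (0:ℝ) < 2*p := by linarith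
    have han := aSeq_pos n
    have hinv : (0:ℝ) ≤ (aSeq n ^ (2*p))⁻¹ := inv_nonneg.2 (Real.rpow_nonneg han.le _)
    have hpt : ∀ ω, (Z n ω) ^ (2*p) ≤ ∑ k ∈ Finset.range (2^n),
        ENNReal.ofReal ((|ξ n k ω| / aSeq n) ^ (2*p)) := by
      intro ω
      have hsup : Z n ω ≤ (∑ k ∈ Finset.range (2^n),
          ENNReal.ofReal ((|ξ n k ω| / aSeq n) ^ (2*p))) ^ (1/(2*p)) := by
        apply iSup_le; intro k; apply iSup_le; intro hk
        have hterm1 : ENNReal.ofReal (|ξ n k ω| / aSeq n) ^ (2*p) ≤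
            ∑ j ∈ Finset.range (2^n), ENNReal.ofReal ((|ξ n j ω| / aSeq n) ^ (2*p)) := by
          rw [ENNReal.ofReal_rpow_of_nonneg (by positivity) h2p.le]
          exact Finset.single_le_sum
            (f := fun j => ENNReal.ofReal ((|ξ n j ω| / aSeq n) ^ (2*p)))
            (fun j _ => zero_le) (Finset.mem_range.2 (by omega))
        have h := ENNReal.rpow_le_rpow hterm1 (by positivity : (0:ℝ) ≤ 1/(2*p))
        rwa [← ENNReal.rpow_mul, mul_one_div, div_self h2p.ne', ENNReal.rpow_one] at h
      calc (Z n ω)^(2*p) ≤ ((∑ k ∈ Finset.range (2^n),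
            ENNReal.ofReal ((|ξ n k ω| / aSeq n) ^ (2*p))) ^ (1/(2*p)))^(2*p) :=
            ENNReal.rpow_le_rpow hsup h2p.le
        _ = _ := by rw [← ENNReal.rpow_mul, one_div, inv_mul_cancel₀ h2p.ne', ENNReal.rpow_one]
    have hgmeas : Measurable (fun x : ℝ => ENNReal.ofReal ((|x| / aSeq n) ^ (2*p))) := by
      fun_prop
    have hker : ∀ k : ℕ, ∫⁻ ω, ENNReal.ofReal ((|ξ n k ω| / aSeq n) ^ (2*p)) ∂P
        ≤ ENNReal.ofReal (((2:ℝ)^n) ^ p * Cq) := by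
      intro k
      rw [hchg n k _ hgmeas]
      have hpt2 : ∀ x : ℝ, ENNReal.ofReal ((|x| / aSeq n) ^ (2*p))
          = ENNReal.ofReal ((aSeq n ^ (2*p))⁻¹) * ENNReal.ofReal (|x| ^ (2*p)) := by
        intro x
        rw [Real.div_rpow (abs_nonneg x) han.le, div_eq_mul_inv, mul_comm,
          ENNReal.ofReal_mul hinv]
      simp only [hpt2]
      rw [lintegral_const_mul' _ _ ENNReal.ofReal_ne_top]
      have h2n : (1:ℝ) ≤ 2^n := one_le_pow₀ (by norm_num)
      have hvle : ((Real.toNNReal ((1:ℝ)/2^n)) : ℝ) ≤ 1 := by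
        rw [hvco n, div_le_one (by positivity)]
        exact h2n
      have hbm := gaussian_abs_rpow_le (Real.toNNReal ((1:ℝ)/2^n)) hvle h2p.le
      calc ENNReal.ofReal ((aSeq n ^ (2*p))⁻¹) * ∫⁻ x, ENNReal.ofReal (|x| ^ (2*p)) ∂(gm n)
          ≤ ENNReal.ofReal ((aSeq n ^ (2*p))⁻¹) * ENNReal.ofReal Cq := by
            apply mul_le_mul_right
            rw [hCq]
            exact hbm
        _ = ENNReal.ofReal ((aSeq n ^ (2*p))⁻¹ * Cq) := (ENNReal.ofReal_mul hinv).symm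
        _ ≤ ENNReal.ofReal (((2:ℝ)^n) ^ p * Cq) := by
            apply ENNReal.ofReal_le_ofReal
            apply mul_le_mul_of_nonneg_right _ hCq0.le
            have e1 : aSeq n ^ (2*p) = (((n:ℝ)+1)/2^n) ^ p := by
              rw [show (2:ℝ)*p = ((2:ℕ):ℝ)*p by norm_num, Real.rpow_mul han.le,
                Real.rpow_natCast, aSeq_sq n]
            have e2 : ((1:ℝ)/2^n) ^ p ≤ (((n:ℝ)+1)/2^n) ^ p := by
              apply Real.rpow_le_rpow (by positivity) _ hp0.le
              gcongr
              linarith [Nat.cast_nonneg (α := ℝ) n]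
            calc (aSeq n ^ (2*p))⁻¹ = ((((n:ℝ)+1)/2^n) ^ p)⁻¹ := by rw [e1]
              _ ≤ (((1:ℝ)/2^n) ^ p)⁻¹ := by
                  apply inv_anti₀ _ e2
                  positivity
              _ = ((2:ℝ)^n) ^ p := by
                  rw [one_div, Real.inv_rpow (by positivity), inv_inv]
    calc ∫⁻ ω, (Z n ω) ^ (2*p) ∂P ≤ ∫⁻ ω, ∑ k ∈ Finset.range (2^n),
          ENNReal.ofReal ((|ξ n k ω| / aSeq n) ^ (2*p)) ∂P := lintegral_mono hpt
      _ = ∑ k ∈ Finset.range (2^n), ∫⁻ ω, ENNReal.ofReal ((|ξ n k ω| / aSeq n) ^ (2*p)) ∂P :=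
          lintegral_finset_sum _ (fun k _ => hgmeas.comp (hξmeas n k))
      _ ≤ ∑ k ∈ Finset.range (2^n), ENNReal.ofReal (((2:ℝ)^n) ^ p * Cq) :=
          Finset.sum_le_sum (fun k _ => hker k)
      _ = (2^n : ℕ) • ENNReal.ofReal (((2:ℝ)^n) ^ p * Cq) := by
          rw [Finset.sum_const, Finset.card_range]
      _ = ENNReal.ofReal ((2:ℝ)^n * (((2:ℝ)^n) ^ p * Cq)) := by
          rw [nsmul_eq_mul]
          have hc : ((2^n : ℕ) : ℝ≥0∞) = ENNReal.ofReal ((2:ℝ)^n) := by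
            rw [← ENNReal.ofReal_natCast (2^n)]
            congr 1
            push_cast
            ring
          rw [hc, ← ENNReal.ofReal_mul (by positivity)]
  -- tail bound
  have htail : ∀ n : ℕ, P {ω | ENNReal.ofReal lam < Z n ω} ≤
      ENNReal.ofReal ((2:ℝ)^n * (2 * Real.exp (-(lam^2*((n:ℝ)+1))/2))) := by
    intro n
    have han := aSeq_pos n
    set c : ℝ := lam * aSeq n with hcdef
    set θ : ℝ := lam * aSeq n * 2^n with hθ
    have hθ0 : 0 ≤ θ := by
      rw [hθ]
      have := mul_pos (mul_pos hlam0 han) (by positivity : (0:ℝ) < 2^n)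
      linarith
    have hsub : {ω | ENNReal.ofReal lam < Z n ω} ⊆
        ⋃ k ∈ Finset.range (2^n), ξ n k ⁻¹' {x | c < |x|} := by
      intro ω hω
      have h1 : ENNReal.ofReal lam < Z n ω := hω
      obtain ⟨k, hk⟩ := lt_iSup_iff.mp h1
      obtain ⟨hkle, hlt⟩ := lt_iSup_iff.mp hk
      have h2 : lam < |ξ n k ω| / aSeq n := by
        by_contra hle
        push_neg at hle
        exact absurd (ENNReal.ofReal_le_ofReal hle) (not_le.2 hlt)
      have h3 : ω ∈ ξ n k ⁻¹' {x | c < |x|} := by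
        show c < |ξ n k ω|
        rw [hcdef]
        exact (lt_div_iff₀ han).mp h2
      exact Set.mem_biUnion (Finset.mem_range.2 (by omega)) h3
    have hAms : MeasurableSet {x : ℝ | c < |x|} :=
      measurableSet_lt measurable_const measurable_abs
    calc P {ω | ENNReal.ofReal lam < Z n ω}
        ≤ ∑ k ∈ Finset.range (2^n), P (ξ n k ⁻¹' {x | c < |x|}) :=
          (measure_mono hsub).trans (measure_biUnion_finset_le _ _)
      _ ≤ ∑ k ∈ Finset.range (2^n), ENNReal.ofReal (2 * Real.exp (-(lam^2*((n:ℝ)+1))/2)) := by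
          apply Finset.sum_le_sum
          intro k _
          rw [hsetch n k _ hAms]
          have hgt := gaussian_tail (Real.toNNReal ((1:ℝ)/2^n)) (c := c) (θ := θ) hθ0
          have h2 : aSeq n^2 * 2^n = ((n:ℝ)+1) := by
            rw [aSeq_sq n]
            field_simp
          have e1 : θ^2 * ((Real.toNNReal ((1:ℝ)/2^n)):ℝ)/2 = lam^2 * (aSeq n^2*2^n)/2 := by
            rw [hvco n, hθ]
            field_simp
          have e2 : θ * c = lam^2 * (aSeq n^2*2^n) := by
            rw [hθ, hcdef]
            ring
          have hexp : θ^2 * ((Real.toNNReal ((1:ℝ)/2^n)):ℝ) / 2 - θ * c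
              = -(lam^2*((n:ℝ)+1))/2 := by
            rw [e1, e2, h2]
            ring
          rw [hexp] at hgt
          exact hgt
      _ = (2^n : ℕ) • ENNReal.ofReal (2 * Real.exp (-(lam^2*((n:ℝ)+1))/2)) := by
          rw [Finset.sum_const, Finset.card_range]
      _ = ENNReal.ofReal ((2:ℝ)^n * (2 * Real.exp (-(lam^2*((n:ℝ)+1))/2))) := by
          rw [nsmul_eq_mul]
          have hc2 : ((2^n : ℕ) : ℝ≥0∞) = ENNReal.ofReal ((2:ℝ)^n) := by
            rw [← ENNReal.ofReal_natCast (2^n)]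
            congr 1
            push_cast
            ring
          rw [hc2, ← ENNReal.ofReal_mul (by positivity)]
  -- Hoelder bound per level
  set U : ℕ → Set Ω := fun n => {ω | ENNReal.ofReal lam < Z n ω} with hU
  have hUmeas : ∀ n, MeasurableSet (U n) :=
    fun n => measurableSet_lt measurable_const (hZmeas n)
  set g : ℕ → ℝ := fun n => Real.sqrt ((2:ℝ)^n * (((2:ℝ)^n) ^ p * Cq)) *
      Real.sqrt ((2:ℝ)^n * (2 * Real.exp (-(lam^2*((n:ℝ)+1))/2))) with hg
  have hterm : ∀ n : ℕ, ∫⁻ ω, ((U n).indicator (Z n) ω) ^ p ∂P ≤ ENNReal.ofReal (g n) := by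
    intro n
    have hconj : Real.HolderConjugate 2 2 :=
      (Real.holderConjugate_iff).2 ⟨one_lt_two, by norm_num⟩
    have hbn0 : (0:ℝ) ≤ (2:ℝ)^n * (((2:ℝ)^n) ^ p * Cq) := by
      have : (0:ℝ) ≤ ((2:ℝ)^n) ^ p := Real.rpow_nonneg (by positivity) p
      positivity
    have htn0 : (0:ℝ) ≤ (2:ℝ)^n * (2 * Real.exp (-(lam^2*((n:ℝ)+1))/2)) := by positivity
    have hH := ENNReal.lintegral_mul_le_Lp_mul_Lq P hconj
      (((hZmeas n).pow_const p).aemeasurable)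
      ((measurable_const.indicator (hUmeas n) :
        Measurable ((U n).indicator (1 : Ω → ℝ≥0∞))).aemeasurable)
    have hfac1 : (∫⁻ ω, ((Z n ω)^p)^(2:ℝ) ∂P)^(1/(2:ℝ)) ≤
        ENNReal.ofReal (Real.sqrt ((2:ℝ)^n * (((2:ℝ)^n) ^ p * Cq))) := by
      have h1 : ∫⁻ ω, ((Z n ω)^p)^(2:ℝ) ∂P
          ≤ ENNReal.ofReal ((2:ℝ)^n * (((2:ℝ)^n) ^ p * Cq)) := by
        calc ∫⁻ ω, ((Z n ω)^p)^(2:ℝ) ∂P = ∫⁻ ω, (Z n ω)^(2*p) ∂P := by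
              apply lintegral_congr
              intro ω
              rw [← ENNReal.rpow_mul, mul_comm]
          _ ≤ _ := hmom n
      calc (∫⁻ ω, ((Z n ω)^p)^(2:ℝ) ∂P)^(1/(2:ℝ))
          ≤ (ENNReal.ofReal ((2:ℝ)^n * (((2:ℝ)^n) ^ p * Cq)))^(1/(2:ℝ)) :=
            ENNReal.rpow_le_rpow h1 (by norm_num)
        _ = ENNReal.ofReal (((2:ℝ)^n * (((2:ℝ)^n) ^ p * Cq)) ^ ((1:ℝ)/2)) :=
            ENNReal.ofReal_rpow_of_nonneg hbn0 (by norm_num)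
        _ = ENNReal.ofReal (Real.sqrt ((2:ℝ)^n * (((2:ℝ)^n) ^ p * Cq))) := by
            rw [Real.sqrt_eq_rpow]
    have hfac2 : (∫⁻ ω, ((U n).indicator (1 : Ω → ℝ≥0∞) ω)^(2:ℝ) ∂P)^(1/(2:ℝ)) ≤
        ENNReal.ofReal (Real.sqrt ((2:ℝ)^n * (2 * Real.exp (-(lam^2*((n:ℝ)+1))/2)))) := by
      have h1 : ∫⁻ ω, ((U n).indicator (1 : Ω → ℝ≥0∞) ω)^(2:ℝ) ∂P
          ≤ ENNReal.ofReal ((2:ℝ)^n * (2 * Real.exp (-(lam^2*((n:ℝ)+1))/2))) := by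
        have e : ∀ ω : Ω, ((U n).indicator (1 : Ω → ℝ≥0∞) ω)^(2:ℝ)
            = (U n).indicator (1 : Ω → ℝ≥0∞) ω := by
          intro ω
          by_cases hω : ω ∈ U n
          · simp [Set.indicator_of_mem hω]
          · simp [Set.indicator_of_notMem hω,
              ENNReal.zero_rpow_of_pos (by norm_num : (0:ℝ) < 2)]
        calc ∫⁻ ω, ((U n).indicator (1 : Ω → ℝ≥0∞) ω)^(2:ℝ) ∂P
            = ∫⁻ ω, (U n).indicator (1 : Ω → ℝ≥0∞) ω ∂P := by
              apply lintegral_congr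
              exact e
          _ = P (U n) := lintegral_indicator_one (hUmeas n)
          _ ≤ _ := htail n
      calc (∫⁻ ω, ((U n).indicator (1 : Ω → ℝ≥0∞) ω)^(2:ℝ) ∂P)^(1/(2:ℝ))
          ≤ (ENNReal.ofReal ((2:ℝ)^n * (2 * Real.exp (-(lam^2*((n:ℝ)+1))/2))))^(1/(2:ℝ)) :=
            ENNReal.rpow_le_rpow h1 (by norm_num)
        _ = ENNReal.ofReal (((2:ℝ)^n * (2 * Real.exp (-(lam^2*((n:ℝ)+1))/2))) ^ ((1:ℝ)/2)) :=
            ENNReal.ofReal_rpow_of_nonneg htn0 (by norm_num)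
        _ = ENNReal.ofReal (Real.sqrt ((2:ℝ)^n * (2 * Real.exp (-(lam^2*((n:ℝ)+1))/2)))) := by
            rw [Real.sqrt_eq_rpow]
    have hpt : ∀ ω, ((U n).indicator (Z n) ω) ^ p
        = ((fun ω => (Z n ω)^p) * ((U n).indicator (1 : Ω → ℝ≥0∞))) ω := by
      intro ω
      by_cases hω : ω ∈ U n
      · simp [Set.indicator_of_mem hω]
      · simp [Set.indicator_of_notMem hω, ENNReal.zero_rpow_of_pos hp0]
    calc ∫⁻ ω, ((U n).indicator (Z n) ω) ^ p ∂P
        = ∫⁻ ω, ((fun ω => (Z n ω)^p) * ((U n).indicator (1 : Ω → ℝ≥0∞))) ω ∂P := by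
          apply lintegral_congr
          exact hpt
      _ ≤ (∫⁻ ω, ((Z n ω)^p)^(2:ℝ) ∂P)^(1/(2:ℝ)) *
          (∫⁻ ω, ((U n).indicator (1 : Ω → ℝ≥0∞) ω)^(2:ℝ) ∂P)^(1/(2:ℝ)) := hH
      _ ≤ ENNReal.ofReal (Real.sqrt ((2:ℝ)^n * (((2:ℝ)^n) ^ p * Cq))) *
          ENNReal.ofReal (Real.sqrt ((2:ℝ)^n * (2 * Real.exp (-(lam^2*((n:ℝ)+1))/2)))) :=
          mul_le_mul' hfac1 hfac2
      _ = ENNReal.ofReal (g n) := by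
          rw [hg, ← ENNReal.ofReal_mul (Real.sqrt_nonneg _)]
  -- pathwise domination of the double supremum
  have hKpos : 0 < Kchain := by
    have h1 := Ctail_pos
    have h2 : 0 < Comega := Real.sqrt_pos.2 (div_pos (by norm_num) log2_pos)
    rw [Kchain]
    nlinarith
  have hXle : ∀ᵐ ω ∂P, (⨆ (s : ℝ) (t : ℝ) (_ : 0 ≤ s) (_ : s < t) (_ : t ≤ 1),
      ENNReal.ofReal (|B t ω - B s ω| / omegaQ (1/2) (t - s)))
      ≤ ENNReal.ofReal Kchain * (⨆ n, Z n ω) := by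
    filter_upwards [hcont] with ω hω
    by_cases hfin : (⨆ n, Z n ω) = ⊤
    · rw [hfin, ENNReal.mul_top (ENNReal.ofReal_pos.2 hKpos).ne']
      exact le_top
    · set Y := (⨆ n, Z n ω).toReal with hYdef
      have hY0 : 0 ≤ Y := ENNReal.toReal_nonneg
      have hYb : ∀ n k : ℕ, k + 1 ≤ 2^n →
          |B (((k:ℝ)+1)/2^n) ω - B ((k:ℝ)/2^n) ω| ≤ Y * aSeq n := by
        intro n k hk
        have h1 : ENNReal.ofReal (|ξ n k ω| / aSeq n) ≤ ⨆ m, Z m ω := by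
          refine le_trans ?_ (le_iSup (fun m => Z m ω) n)
          exact le_iSup₂ (f := fun k (_ : k+1 ≤ 2^n) =>
            ENNReal.ofReal (|ξ n k ω| / aSeq n)) k hk
        have h2 : |ξ n k ω| / aSeq n ≤ Y := (ENNReal.ofReal_le_iff_le_toReal hfin).1 h1
        rw [div_le_iff₀ (aSeq_pos n)] at h2
        exact h2
      apply iSup_le; intro s; apply iSup_le; intro t
      apply iSup_le; intro h1; apply iSup_le; intro h2; apply iSup_le; intro h3
      have hchn := chain (f := fun u => B u ω) hω hY0 hYb h1 h2 h3
      have hom0 : 0 < omegaQ (1/2) (t - s) := omega_half_pos (by linarith)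
      have hr : |B t ω - B s ω| / omegaQ (1/2) (t-s) ≤ Kchain * Y := by
        rw [div_le_iff₀ hom0]
        exact hchn
      calc ENNReal.ofReal (|B t ω - B s ω| / omegaQ (1/2) (t - s))
          ≤ ENNReal.ofReal (Kchain * Y) := ENNReal.ofReal_le_ofReal hr
        _ = ENNReal.ofReal Kchain * ENNReal.ofReal Y := ENNReal.ofReal_mul hKpos.le
        _ = ENNReal.ofReal Kchain * (⨆ n, Z n ω) := by rw [hYdef, ENNReal.ofReal_toReal hfin]
  -- sup over n bounded via truncation
  set V : Ω → ℝ≥0∞ := fun ω => ∑' n, ((U n).indicator (Z n) ω) ^ p with hV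
  have hsup_le : ∀ ω, (⨆ n, Z n ω) ≤ ENNReal.ofReal lam + V ω ^ (1/p) := by
    intro ω
    apply iSup_le; intro n
    rcases le_or_gt (Z n ω) (ENNReal.ofReal lam) with h | h
    · exact h.trans le_self_add
    · have hmem : ω ∈ U n := h
      have h1 : ((U n).indicator (Z n) ω) ≤ V ω ^ (1/p) :=
        ennreal_le_rpow_tsum hp0 (fun m => ((U m).indicator (Z m) ω)) n
      rw [Set.indicator_of_mem hmem] at h1
      exact h1.trans le_add_self
  -- summability of g
  have hgsum : (∑' n, ENNReal.ofReal (g n)) < ⊤ := by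
    set A : ℝ := Real.sqrt Cq * Real.sqrt 2 with hA
    set rho : ℝ := (2:ℝ)^(((2+p)/2 : ℝ)) * Real.exp (-(lam^2)/4) with hrho
    have hrho0 : 0 ≤ rho := by
      have : (0:ℝ) ≤ (2:ℝ)^(((2+p)/2 : ℝ)) := Real.rpow_nonneg (by norm_num) _
      rw [hrho]; positivity
    have hrho1 : rho < 1 := rho_lt_one hp hlam
    have hsum : Summable (fun n : ℕ => A * rho^n) :=
      (summable_geometric_of_lt_one hrho0 hrho1).mul_left A
    have hgn : ∀ n, g n ≤ A * rho^n := fun n => gbound hp hCq0 hlam n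
    have hg0 : ∀ n, 0 ≤ g n := by
      intro n
      rw [hg]
      positivity
    have hsum2 : Summable g := Summable.of_nonneg_of_le hg0 hgn hsum
    calc (∑' n, ENNReal.ofReal (g n)) = ENNReal.ofReal (∑' n, g n) :=
          (ENNReal.ofReal_tsum_of_nonneg hg0 hsum2).symm
      _ < ⊤ := ENNReal.ofReal_lt_top
  -- main integral bound
  have hVint : ∫⁻ ω, V ω ∂P < ⊤ := by
    rw [hV]
    simp only
    rw [lintegral_tsum (fun n => (((hZmeas n).indicator (hUmeas n)).pow_const p).aemeasurable)]
    calc ∑' n, ∫⁻ ω, ((U n).indicator (Z n) ω) ^ p ∂P ≤ ∑' n, ENNReal.ofReal (g n) :=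
          ENNReal.tsum_le_tsum hterm
      _ < ⊤ := hgsum
  have hmain : ∫⁻ ω, (⨆ n, Z n ω) ^ p ∂P < ⊤ := by
    have hb : ∀ ω, (⨆ n, Z n ω) ^ p ≤ 2^p * (ENNReal.ofReal lam ^ p + V ω) := by
      intro ω
      calc (⨆ n, Z n ω) ^ p ≤ (ENNReal.ofReal lam + V ω ^ (1/p)) ^ p :=
            ENNReal.rpow_le_rpow (hsup_le ω) hp0.le
        _ ≤ 2^p * (ENNReal.ofReal lam ^ p + (V ω ^ (1/p)) ^ p) :=
            ennreal_rpow_add_le _ _ hp0.le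
        _ = 2^p * (ENNReal.ofReal lam ^ p + V ω) := by
            rw [← ENNReal.rpow_mul, one_div, inv_mul_cancel₀ hp0.ne', ENNReal.rpow_one]
    calc ∫⁻ ω, (⨆ n, Z n ω) ^ p ∂P ≤ ∫⁻ ω, 2^p * (ENNReal.ofReal lam ^ p + V ω) ∂P :=
          lintegral_mono hb
      _ = 2^p * ∫⁻ ω, (ENNReal.ofReal lam ^ p + V ω) ∂P :=
          lintegral_const_mul' _ _ (by
            exact ENNReal.rpow_ne_top_of_nonneg hp0.le (by norm_num))
      _ = 2^p * (ENNReal.ofReal lam ^ p * 1 + ∫⁻ ω, V ω ∂P) := by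
          rw [lintegral_add_left measurable_const, lintegral_const, measure_univ]
      _ < ⊤ := by
          apply ENNReal.mul_lt_top
          · exact ENNReal.rpow_lt_top_of_nonneg hp0.le (by norm_num)
          · apply ENNReal.add_lt_top.2
            constructor
            · rw [mul_one]
              exact ENNReal.rpow_lt_top_of_nonneg hp0.le ENNReal.ofReal_ne_top
            · exact hVint
  -- conclude
  calc ∫⁻ ω, (⨆ (s : ℝ) (t : ℝ) (_ : 0 ≤ s) (_ : s < t) (_ : t ≤ 1),
        ENNReal.ofReal (|B t ω - B s ω| / omegaQ (1/2) (t - s))) ^ p ∂P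
      ≤ ∫⁻ ω, (ENNReal.ofReal Kchain * (⨆ n, Z n ω)) ^ p ∂P := by
        apply lintegral_mono_ae
        filter_upwards [hXle] with ω hω
        exact ENNReal.rpow_le_rpow hω hp0.le
    _ = ∫⁻ ω, ENNReal.ofReal Kchain ^ p * (⨆ n, Z n ω) ^ p ∂P := by
        congr 1
        ext ω
        rw [ENNReal.mul_rpow_of_nonneg _ _ hp0.le]
    _ = ENNReal.ofReal Kchain ^ p * ∫⁻ ω, (⨆ n, Z n ω) ^ p ∂P :=
        lintegral_const_mul' _ _ (ENNReal.rpow_ne_top_of_nonneg hp0.le ENNReal.ofReal_ne_top)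
    _ < ⊤ := ENNReal.mul_lt_top
        (ENNReal.rpow_lt_top_of_nonneg hp0.le ENNReal.ofReal_ne_top) hmain
end
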